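/- arXiv:1509.05902 — 7 statements merged into one kernel-verified Lean document; each statement's English description precedes it below -/
import Mathlib

section
/- Let μ be a nonnegative measure on [0,a] with a > 0, and define ψ(s) = ∫_0^a log(1 + t·s) dμ(t) for s ≥ 0 (assuming the integral is finite). If x, y ∈ ℝ_+^n satisfy e_k(x) ≤ e_k(y) for all k = 1,…,n, then Σ_{i=1}^n ψ(x_i) ≤ Σ_{i=1}^n ψ(y_i). -/
open Finset Real MeasureTheory

noncomputable def esymm (n k : ℕ) (x : Fin n → ℝ) : ℝ :=
  ∑ s ∈ Finset.powersetCard k (Finset.univ : Finset (Fin n)), ∏ i ∈ s, x i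

lemma prod_one_add_eq (n : ℕ) (t : ℝ) (x : Fin n → ℝ) :
    ∏ i, (1 + t * x i) = ∑ k ∈ Finset.range (n + 1), esymm n k x * t ^ k := by
  have h := Finset.prod_add (fun i => t * x i) (fun _ => (1 : ℝ))
    (Finset.univ : Finset (Fin n))
  simp only [Finset.prod_const_one, mul_one] at h
  have h2 : ∏ i, (1 + t * x i) = ∑ s ∈ (Finset.univ : Finset (Fin n)).powerset,
      ∏ i ∈ s, (t * x i) := by
    rw [← h]; congr 1; ext i; ring
  rw [h2, Finset.powerset_card_disjiUnion]
  erw [Finset.sum_disjiUnion]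
  simp only [Finset.card_univ, Fintype.card_fin]
  refine Finset.sum_congr rfl fun k _ => ?_
  rw [esymm, Finset.sum_mul]
  refine Finset.sum_congr rfl fun s hs => ?_
  rw [Finset.prod_mul_distrib, Finset.prod_const, (Finset.mem_powersetCard.1 hs).2]
  ring

theorem stmt_2 (n : ℕ) (a : ℝ) (ha : 0 < a) (μ : Measure ℝ)
    (ψ : ℝ → ℝ)
    (hψ : ∀ s : ℝ, 0 ≤ s → ψ s = ∫ t in Set.Icc 0 a, Real.log (1 + t * s) ∂μ)
    (hint : ∀ s : ℝ, 0 ≤ s →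
      IntegrableOn (fun t => Real.log (1 + t * s)) (Set.Icc 0 a) μ)
    (x y : Fin n → ℝ) (hx : ∀ i, 0 ≤ x i) (hy : ∀ i, 0 ≤ y i)
    (hE : ∀ k, 1 ≤ k → k ≤ n → esymm n k x ≤ esymm n k y) :
    ∑ i, ψ (x i) ≤ ∑ i, ψ (y i) := by
  have key : ∀ t ∈ Set.Icc (0:ℝ) a,
      ∑ i, Real.log (1 + t * x i) ≤ ∑ i, Real.log (1 + t * y i) := by
    intro t ht
    have ht0 : 0 ≤ t := ht.1
    have hxpos : ∀ i, (0:ℝ) < 1 + t * x i := fun i => by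
      have := mul_nonneg ht0 (hx i); linarith
    have hypos : ∀ i, (0:ℝ) < 1 + t * y i := fun i => by
      have := mul_nonneg ht0 (hy i); linarith
    have hlx : ∑ i, Real.log (1 + t * x i) = Real.log (∏ i, (1 + t * x i)) :=
      (Real.log_prod fun i _ => (hxpos i).ne').symm
    have hly : ∑ i, Real.log (1 + t * y i) = Real.log (∏ i, (1 + t * y i)) :=
      (Real.log_prod fun i _ => (hypos i).ne').symm
    rw [hlx, hly]
    apply Real.log_le_log (Finset.prod_pos fun i _ => hxpos i)
    rw [prod_one_add_eq, prod_one_add_eq]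
    refine Finset.sum_le_sum fun k hk => ?_
    rcases Nat.eq_zero_or_pos k with rfl | hk1
    · simp [esymm]
    · have hkn : k ≤ n := Nat.lt_succ_iff.1 (Finset.mem_range.1 hk)
      exact mul_le_mul_of_nonneg_right (hE k hk1 hkn) (pow_nonneg ht0 k)
  have hxint : IntegrableOn (fun t => ∑ i, Real.log (1 + t * x i)) (Set.Icc 0 a) μ :=
    integrable_finset_sum _ fun i _ => hint (x i) (hx i)
  have hyint : IntegrableOn (fun t => ∑ i, Real.log (1 + t * y i)) (Set.Icc 0 a) μ :=
    integrable_finset_sum _ fun i _ => hint (y i) (hy i)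
  calc ∑ i, ψ (x i)
      = ∑ i, ∫ t in Set.Icc 0 a, Real.log (1 + t * x i) ∂μ := by
        exact Finset.sum_congr rfl fun i _ => hψ (x i) (hx i)
    _ = ∫ t in Set.Icc 0 a, ∑ i, Real.log (1 + t * x i) ∂μ :=
        (integral_finset_sum _ fun i _ => hint (x i) (hx i)).symm
    _ ≤ ∫ t in Set.Icc 0 a, ∑ i, Real.log (1 + t * y i) ∂μ :=
        setIntegral_mono_on hxint hyint measurableSet_Icc key
    _ = ∑ i, ∫ t in Set.Icc 0 a, Real.log (1 + t * y i) ∂μ :=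
        integral_finset_sum _ fun i _ => hint (y i) (hy i)
    _ = ∑ i, ψ (y i) := (Finset.sum_congr rfl fun i _ => (hψ (y i) (hy i)).symm)
end

section
/- Let μ be a nonnegative measure on [0,a] with a > 0, and define ψ(s) = ∫_0^a log(t + s) dμ(t) for s ≥ 0 (assuming the integral is finite). If x, y are strictly positive vectors in ℝ^n with e_k(x) ≤ e_k(y) for all k = 1,…,n, then Σ_{i=1}^n ψ(x_i) ≤ Σ_{i=1}^n ψ(y_i). -/
open Finset Real MeasureTheory

lemma prod_add_expand (n : ℕ) (z : Fin n → ℝ) (t : ℝ) :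
    ∏ i, (t + z i) = ∑ j ∈ Finset.range (n + 1), esymm n j z * t ^ (n - j) := by
  have h1 : ∀ i : Fin n, t + z i = z i + t := fun i => add_comm _ _
  simp_rw [h1]
  rw [Finset.prod_add]
  rw [Finset.sum_powerset]
  simp only [Finset.card_univ, Fintype.card_fin]
  refine Finset.sum_congr rfl fun j hj => ?_
  rw [esymm, Finset.sum_mul]
  refine Finset.sum_congr rfl fun s hs => ?_
  have hcard : s.card = j := (Finset.mem_powersetCard.mp hs).2
  rw [Finset.prod_const, Finset.card_sdiff_of_subset (Finset.subset_univ s),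
    Finset.card_univ, Fintype.card_fin, hcard]

lemma esymm_zero (n : ℕ) (z : Fin n → ℝ) : esymm n 0 z = 1 := by
  simp [esymm]

theorem stmt_3 (n : ℕ) (a : ℝ) (ha : 0 < a) (μ : Measure ℝ)
    (ψ : ℝ → ℝ)
    (hψ : ∀ s : ℝ, 0 ≤ s → ψ s = ∫ t in Set.Icc 0 a, Real.log (t + s) ∂μ)
    (hint : ∀ s : ℝ, 0 ≤ s →
      IntegrableOn (fun t => Real.log (t + s)) (Set.Icc 0 a) μ)
    (x y : Fin n → ℝ) (hx : ∀ i, 0 < x i) (hy : ∀ i, 0 < y i)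
    (hE : ∀ k, 1 ≤ k → k ≤ n → esymm n k x ≤ esymm n k y) :
    ∑ i, ψ (x i) ≤ ∑ i, ψ (y i) := by
  have hprod : ∀ t : ℝ, 0 ≤ t → ∏ i, (t + x i) ≤ ∏ i, (t + y i) := by
    intro t ht
    rw [prod_add_expand, prod_add_expand]
    refine Finset.sum_le_sum fun j hj => ?_
    rcases Nat.eq_zero_or_pos j with rfl | hjpos
    · rw [esymm_zero, esymm_zero]
    · have hjn : j ≤ n := Nat.lt_succ_iff.mp (Finset.mem_range.mp hj)
      exact mul_le_mul_of_nonneg_right (hE j hjpos hjn) (pow_nonneg ht _)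
  have hlog : ∀ t : ℝ, t ∈ Set.Icc (0:ℝ) a →
      ∑ i, Real.log (t + x i) ≤ ∑ i, Real.log (t + y i) := by
    intro t ht
    have ht0 : 0 ≤ t := ht.1
    have hpx : ∀ i ∈ Finset.univ, t + x i ≠ 0 := fun i _ =>
      ne_of_gt (add_pos_of_nonneg_of_pos ht0 (hx i))
    have hpy : ∀ i ∈ Finset.univ, t + y i ≠ 0 := fun i _ =>
      ne_of_gt (add_pos_of_nonneg_of_pos ht0 (hy i))
    rw [← Real.log_prod hpx, ← Real.log_prod hpy]
    apply Real.log_le_log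
    · exact Finset.prod_pos fun i _ => add_pos_of_nonneg_of_pos ht0 (hx i)
    · exact hprod t ht0
  have hx' : ∀ i, (0:ℝ) ≤ x i := fun i => (hx i).le
  have hy' : ∀ i, (0:ℝ) ≤ y i := fun i => (hy i).le
  calc ∑ i, ψ (x i) = ∫ t in Set.Icc 0 a, ∑ i, Real.log (t + x i) ∂μ := by
        rw [MeasureTheory.integral_finset_sum _ fun i _ => hint (x i) (hx' i)]
        exact Finset.sum_congr rfl fun i _ => hψ (x i) (hx' i)
    _ ≤ ∫ t in Set.Icc 0 a, ∑ i, Real.log (t + y i) ∂μ := by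
        apply MeasureTheory.setIntegral_mono_on
        · exact MeasureTheory.integrable_finset_sum _ fun i _ => hint (x i) (hx' i)
        · exact MeasureTheory.integrable_finset_sum _ fun i _ => hint (y i) (hy' i)
        · exact measurableSet_Icc
        · exact hlog
    _ = ∑ i, ψ (y i) := by
        rw [MeasureTheory.integral_finset_sum _ fun i _ => hint (y i) (hy' i)]
        exact Finset.sum_congr rfl fun i _ => (hψ (y i) (hy' i)).symm
end

section
/- For every x > 0, (log x)^2 = ∫_0^∞ log( (1 + t·x)(t + x) / (x·(1 + t)^2) ) · (1/t) dt, and this improper integral converges. -/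
open Real MeasureTheory Set Filter

noncomputable def gg (t s : ℝ) : ℝ := 1/(1+t*s) - 1/(s*(t+s))

lemma gg_closed (t s : ℝ) (ht : 0 ≤ t) (hs : 0 < s) :
    gg t s = (s^2-1)/(s*(1+t*s)*(t+s)) := by
  have h1 : (0:ℝ) < 1 + t*s := by positivity
  have h2 : (0:ℝ) < t + s := by positivity
  unfold gg
  field_simp
  ring

lemma gg_nonneg (t s : ℝ) (ht : 0 ≤ t) (hs : 1 ≤ s) : 0 ≤ gg t s := by
  have hs0 : (0:ℝ) < s := lt_of_lt_of_le one_pos hs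
  rw [gg_closed t s ht hs0]
  have : (0:ℝ) ≤ s^2 - 1 := by nlinarith
  positivity

lemma hasDerivAt_G (s t : ℝ) (hs : 0 < s) (ht : 0 < t) :
    HasDerivAt (fun u => (Real.log (1+u*s) - Real.log (u+s))/s) (gg t s) t := by
  have h1 : HasDerivAt (fun u : ℝ => 1+u*s) s t := by
    simpa using ((hasDerivAt_id t).mul_const s).const_add 1
  have h2 : HasDerivAt (fun u : ℝ => u+s) 1 t := (hasDerivAt_id t).add_const s
  have h1' : (0:ℝ) < 1 + t*s := by positivity
  have h2' : (0:ℝ) < t + s := by positivity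
  have := ((h1.log h1'.ne').sub (h2.log h2'.ne')).div_const s
  have e : gg t s = (s / (1 + t * s) - 1 / (t + s)) / s := by
    unfold gg
    field_simp
  rw [e]
  exact this

lemma tendsto_G (s : ℝ) (hs : 0 < s) :
    Tendsto (fun t => (Real.log (1+t*s) - Real.log (t+s))/s) atTop
      (nhds (Real.log s / s)) := by
  have hinv : Tendsto (fun t : ℝ => t⁻¹) atTop (nhds 0) := tendsto_inv_atTop_zero
  have l0 : Tendsto (fun t : ℝ => (t⁻¹ + s)/(1 + s * t⁻¹)) atTop
      (nhds ((0 + s)/(1 + s * 0))) :=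
    Tendsto.div (hinv.add tendsto_const_nhds)
      (tendsto_const_nhds.add (tendsto_const_nhds.mul hinv)) (by norm_num)
  have l1 : Tendsto (fun t : ℝ => (1+t*s)/(t+s)) atTop (nhds s) := by
    have heq : (fun t : ℝ => (t⁻¹ + s)/(1 + s * t⁻¹)) =ᶠ[atTop]
        (fun t : ℝ => (1+t*s)/(t+s)) := by
      filter_upwards [eventually_gt_atTop 0] with t ht
      have h2 : (0:ℝ) < t + s := by positivity
      rw [div_eq_div_iff (by positivity) h2.ne']
      field_simp
    have := l0.congr' heq
    simpa using this
  have l2 : Tendsto (fun t : ℝ => Real.log ((1+t*s)/(t+s))) atTop (nhds (Real.log s)) :=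
    (Real.continuousAt_log hs.ne').tendsto.comp l1
  have l3 : (fun t : ℝ => Real.log ((1+t*s)/(t+s))) =ᶠ[atTop]
      (fun t => Real.log (1+t*s) - Real.log (t+s)) := by
    filter_upwards [eventually_gt_atTop 0] with t ht
    exact Real.log_div (by positivity) (by positivity)
  exact ((l2.congr' l3).div_const s)

lemma tIntegral (s : ℝ) (hs : 1 ≤ s) :
    IntegrableOn (fun t => gg t s) (Set.Ioi (0:ℝ)) volume ∧
    ∫ t in Set.Ioi (0:ℝ), gg t s = 2 * Real.log s / s := by
  have hs0 : (0:ℝ) < s := lt_of_lt_of_le one_pos hs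
  set G : ℝ → ℝ := fun u => (Real.log (1+u*s) - Real.log (u+s))/s with hG
  have hcont : ContinuousWithinAt G (Set.Ici 0) 0 := by
    apply ContinuousAt.continuousWithinAt
    apply ContinuousAt.div_const
    apply ContinuousAt.sub
    · exact (Real.continuousAt_log (by norm_num)).comp (by fun_prop)
    · exact (Real.continuousAt_log (by positivity)).comp (by fun_prop)
  have hderiv : ∀ t ∈ Set.Ioi (0:ℝ), HasDerivAt G (gg t s) t :=
    fun t ht => hasDerivAt_G s t hs0 ht
  have hpos : ∀ t ∈ Set.Ioi (0:ℝ), 0 ≤ gg t s := fun t ht => gg_nonneg t s (le_of_lt ht) hs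
  have htend : Tendsto G atTop (nhds (Real.log s / s)) := tendsto_G s hs0
  refine ⟨integrableOn_Ioi_deriv_of_nonneg hcont hderiv hpos htend, ?_⟩
  rw [integral_Ioi_of_hasDerivAt_of_nonneg hcont hderiv hpos htend]
  have : G 0 = - (Real.log s / s) := by
    simp [hG]
    ring
  rw [this]
  ring

lemma sIntegral (t x : ℝ) (ht : 0 < t) (hx : 0 < x) :
    ∫ s in (1:ℝ)..x, gg t s =
      Real.log ((1 + t * x) * (t + x) / (x * (1 + t) ^ 2)) * (1 / t) := by
  have hmin : 0 < min 1 x := lt_min one_pos hx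
  have hmem : ∀ s ∈ Set.uIcc (1:ℝ) x, 0 < s := by
    intro s hs
    rcases Set.mem_uIcc.mp hs with ⟨h1, _⟩ | ⟨h1, _⟩ <;> linarith
  have hderiv : ∀ s ∈ Set.uIcc (1:ℝ) x,
      HasDerivAt (fun v => (Real.log (1+t*v) + Real.log (t+v) - Real.log v)/t)
        (gg t s) s := by
    intro s hs
    have hs0 : 0 < s := hmem s hs
    have h1 : HasDerivAt (fun v : ℝ => 1+t*v) t s := by
      simpa using ((hasDerivAt_id s).const_mul t).const_add 1
    have h2 : HasDerivAt (fun v : ℝ => t+v) 1 s := by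
      simpa using (hasDerivAt_id s).const_add t
    have h1' : (0:ℝ) < 1 + t*s := by positivity
    have h2' : (0:ℝ) < t + s := by positivity
    have hd := (((h1.log h1'.ne').add (h2.log h2'.ne')).sub
      (Real.hasDerivAt_log hs0.ne')).div_const t
    have heq : gg t s = (t / (1 + t * s) + 1 / (t + s) - s⁻¹) / t := by
      have a1 := h1'.ne'
      have a2 := h2'.ne'
      have a3 := hs0.ne'
      have a4 := ht.ne'
      unfold gg
      field_simp
      ring
    rw [heq]
    exact hd
  have hcontOn : ContinuousOn (fun s => gg t s) (Set.uIcc 1 x) := by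
    apply ContinuousOn.sub
    · exact ContinuousOn.div continuousOn_const (by fun_prop)
        (fun s hs => by have := hmem s hs; positivity)
    · exact ContinuousOn.div continuousOn_const (by fun_prop)
        (fun s hs => by have := hmem s hs; positivity)
  rw [intervalIntegral.integral_eq_sub_of_hasDerivAt hderiv
    (hcontOn.intervalIntegrable)]
  have hlog : Real.log ((1 + t * x) * (t + x) / (x * (1 + t) ^ 2)) =
      Real.log (1+t*x) + Real.log (t+x) - (Real.log x + 2 * Real.log (1+t)) := by
    rw [Real.log_div (by positivity) (by positivity),
      Real.log_mul (ne_of_gt (by positivity)) (ne_of_gt (by positivity)),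
      Real.log_mul hx.ne' (ne_of_gt (by positivity)), Real.log_pow]
    push_cast
    ring
  rw [hlog]
  have e1 : t + (1:ℝ) = 1 + t := add_comm t 1
  have e2 : t * (1:ℝ) = t := mul_one t
  simp only [e1, e2, Real.log_one]
  field_simp
  ring

lemma main_ge (x : ℝ) (hx : 1 ≤ x) :
    IntegrableOn
      (fun t => Real.log ((1 + t * x) * (t + x) / (x * (1 + t) ^ 2)) * (1 / t))
      (Set.Ioi (0 : ℝ)) volume ∧
    (Real.log x) ^ 2 =
      ∫ t in Set.Ioi (0 : ℝ),
        Real.log ((1 + t * x) * (t + x) / (x * (1 + t) ^ 2)) * (1 / t) := by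
  have hx0 : (0:ℝ) < x := lt_of_lt_of_le one_pos hx
  have hmeas : AEStronglyMeasurable (fun p : ℝ × ℝ => gg p.1 p.2)
      ((volume.restrict (Set.Ioi (0:ℝ))).prod (volume.restrict (Set.Ioc (1:ℝ) x))) := by
    rw [Measure.prod_restrict]
    apply ContinuousOn.aestronglyMeasurable ?_ (measurableSet_Ioi.prod measurableSet_Ioc)
    apply ContinuousOn.sub
    · exact ContinuousOn.div continuousOn_const (by fun_prop)
        (fun p hp => by
          have h1 : (0:ℝ) < p.1 := hp.1
          have h2 : (1:ℝ) < p.2 := hp.2.1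
          positivity)
    · exact ContinuousOn.div continuousOn_const (by fun_prop)
        (fun p hp => by
          have h1 : (0:ℝ) < p.1 := hp.1
          have h2 : (1:ℝ) < p.2 := hp.2.1
          positivity)
  have hprod : Integrable (fun p : ℝ × ℝ => gg p.1 p.2)
      ((volume.restrict (Set.Ioi (0:ℝ))).prod (volume.restrict (Set.Ioc (1:ℝ) x))) := by
    rw [MeasureTheory.integrable_prod_iff' hmeas]
    constructor
    · filter_upwards [ae_restrict_mem measurableSet_Ioc] with s hs
      exact (tIntegral s hs.1.le).1
    · have hval : ∀ s ∈ Set.Ioc (1:ℝ) x,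
          (∫ t in Set.Ioi (0:ℝ), ‖gg t s‖) = 2 * Real.log s / s := by
        intro s hs
        have h1 : ∀ᵐ t ∂(volume.restrict (Set.Ioi (0:ℝ))), ‖gg t s‖ = gg t s := by
          filter_upwards [ae_restrict_mem measurableSet_Ioi] with t ht
          exact Real.norm_of_nonneg (gg_nonneg t s (le_of_lt ht) hs.1.le)
        rw [integral_congr_ae h1]
        exact (tIntegral s hs.1.le).2
      have hcont2 : IntegrableOn (fun s => 2 * Real.log s / s) (Set.Ioc 1 x) volume := by
        apply IntegrableOn.mono_set ?_ Set.Ioc_subset_Icc_self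
        apply ContinuousOn.integrableOn_Icc
        apply ContinuousOn.div
        · exact (continuousOn_const.mul (Real.continuousOn_log.mono (by
            intro s hs
            simp only [Set.mem_compl_iff, Set.mem_singleton_iff]
            intro h
            rw [h] at hs
            exact absurd hs.1 (by norm_num))))
        · exact continuousOn_id
        · intro s hs
          have : (1:ℝ) ≤ s := hs.1
          positivity
      exact hcont2.congr ((ae_restrict_iff' measurableSet_Ioc).2
        (Eventually.of_forall fun s hs => (hval s hs).symm))
  have hmain := hprod.integral_prod_left
  have hptwise : ∀ t ∈ Set.Ioi (0:ℝ),
      (∫ s in Set.Ioc (1:ℝ) x, gg t s) =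
        Real.log ((1 + t * x) * (t + x) / (x * (1 + t) ^ 2)) * (1 / t) := by
    intro t ht
    rw [← intervalIntegral.integral_of_le hx]
    exact sIntegral t x ht hx0
  have hInt : IntegrableOn
      (fun t => Real.log ((1 + t * x) * (t + x) / (x * (1 + t) ^ 2)) * (1 / t))
      (Set.Ioi (0:ℝ)) volume :=
    hmain.congr ((ae_restrict_iff' measurableSet_Ioi).2
      (Eventually.of_forall hptwise))
  refine ⟨hInt, ?_⟩
  have swap := MeasureTheory.integral_integral_swap (f := fun t s => gg t s) hprod
  have step1 : (Real.log x)^2 = ∫ s in Set.Ioc (1:ℝ) x, 2 * Real.log s / s := by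
    rw [← intervalIntegral.integral_of_le hx]
    have hderiv : ∀ s ∈ Set.uIcc (1:ℝ) x,
        HasDerivAt (fun u => (Real.log u)^2) (2 * Real.log s / s) s := by
      intro s hs
      have hs0 : (0:ℝ) < s := by
        rcases Set.mem_uIcc.mp hs with ⟨h1, _⟩ | ⟨h1, _⟩ <;> linarith
      have := (Real.hasDerivAt_log hs0.ne').pow 2
      rw [show 2 * Real.log s / s = ((2:ℕ):ℝ) * Real.log s ^ (2 - 1) * s⁻¹ by
        norm_num [div_eq_mul_inv]]
      exact this
    have hcont : ContinuousOn (fun s => 2 * Real.log s / s) (Set.uIcc 1 x) := by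
      apply ContinuousOn.div
      · apply continuousOn_const.mul
        apply Real.continuousOn_log.mono
        intro s hs
        have hs0 : (0:ℝ) < s := by
          rcases Set.mem_uIcc.mp hs with ⟨h1, _⟩ | ⟨h1, _⟩ <;> linarith
        simp [hs0.ne']
      · exact continuousOn_id
      · intro s hs
        have hs0 : (0:ℝ) < s := by
          rcases Set.mem_uIcc.mp hs with ⟨h1, _⟩ | ⟨h1, _⟩ <;> linarith
        exact hs0.ne'
    rw [intervalIntegral.integral_eq_sub_of_hasDerivAt hderiv hcont.intervalIntegrable]
    simp
  rw [step1]
  have step2 : (∫ s in Set.Ioc (1:ℝ) x, 2 * Real.log s / s) =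
      ∫ s in Set.Ioc (1:ℝ) x, ∫ t in Set.Ioi (0:ℝ), gg t s := by
    apply setIntegral_congr_fun measurableSet_Ioc
    intro s hs
    exact ((tIntegral s hs.1.le).2).symm
  rw [step2, ← swap]
  exact setIntegral_congr_fun measurableSet_Ioi hptwise

theorem stmt_4 (x : ℝ) (hx : 0 < x) :
    IntegrableOn
      (fun t => Real.log ((1 + t * x) * (t + x) / (x * (1 + t) ^ 2)) * (1 / t))
      (Set.Ioi (0 : ℝ)) volume ∧
    (Real.log x) ^ 2 =
      ∫ t in Set.Ioi (0 : ℝ),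
        Real.log ((1 + t * x) * (t + x) / (x * (1 + t) ^ 2)) * (1 / t) := by
  rcases le_or_gt 1 x with h | h
  · exact main_ge x h
  · have h1x : (1:ℝ) ≤ 1 / x := one_le_one_div hx h.le
    obtain ⟨hI, hE⟩ := main_ge (1 / x) h1x
    have heq : ∀ t ∈ Set.Ioi (0:ℝ),
        Real.log ((1 + t * (1/x)) * (t + 1/x) / ((1/x) * (1 + t) ^ 2)) * (1 / t) =
        Real.log ((1 + t * x) * (t + x) / (x * (1 + t) ^ 2)) * (1 / t) := by
      intro t ht
      have ht0 : (0:ℝ) < t := ht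
      congr 1
      congr 1
      rw [div_eq_div_iff (by positivity) (by positivity)]
      have hx' := hx.ne'
      field_simp
      ring
    constructor
    · exact hI.congr ((ae_restrict_iff' measurableSet_Ioi).2
        (Eventually.of_forall heq))
    · have hlg : (Real.log x) ^ 2 = (Real.log (1/x)) ^ 2 := by
        rw [one_div, Real.log_inv]
        ring
      rw [hlg, hE]
      exact setIntegral_congr_fun measurableSet_Ioi heq
end

section
/- For 1 < α < 2 and s ≥ 0, s^α = (α·sin(απ)/π) · ∫_0^∞ (log(1 + t·s) − t·s) · t^{−α−1} dt, and the integral converges. -/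
open Real MeasureTheory

open Set Filter Topology

lemma aux_log_le {u : ℝ} (hu : 0 ≤ u) : Real.log (1 + u) ≤ u := by
  have := Real.log_le_sub_one_of_pos (by linarith : (0:ℝ) < 1 + u); linarith

lemma aux_abs_le_sq {u : ℝ} (hu : 0 ≤ u) : |Real.log (1 + u) - u| ≤ u ^ 2 := by
  have h1 : (0:ℝ) < 1 + u := by linarith
  have h2 := Real.one_sub_inv_le_log_of_pos h1
  have h3 : (1 + u) * (1 + u)⁻¹ = 1 := mul_inv_cancel₀ h1.ne'
  have h4 := aux_log_le hu
  rw [abs_sub_comm, abs_of_nonneg (by linarith)]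
  nlinarith [pow_nonneg hu 3, mul_pos h1 (inv_pos.mpr h1)]

lemma aux_abs_le_lin {u : ℝ} (hu : 0 ≤ u) : |Real.log (1 + u) - u| ≤ u := by
  have h4 := aux_log_le hu
  have h5 : 0 ≤ Real.log (1 + u) := Real.log_nonneg (by linarith)
  rw [abs_sub_comm, abs_of_nonneg (by linarith)]; linarith

lemma contOn_g (α : ℝ) :
    ContinuousOn (fun u : ℝ => (Real.log (1 + u) - u) * u ^ (-α - 1)) (Ioi 0) := by
  apply ContinuousOn.mul
  · apply ContinuousOn.sub _ continuousOn_id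
    apply ContinuousOn.log (by fun_prop)
    intro x hx
    have : (0:ℝ) < x := hx
    positivity
  · intro x hx
    exact (Real.continuousAt_rpow_const x _ (Or.inl (ne_of_gt hx))).continuousWithinAt

lemma integrableOn_g (α : ℝ) (hα : 1 < α) (hα2 : α < 2) :
    IntegrableOn (fun u : ℝ => (Real.log (1 + u) - u) * u ^ (-α - 1)) (Ioi 0) := by
  have hmem : ∀ u : ℝ, 0 < u → ‖(Real.log (1 + u) - u) * u ^ (-α - 1)‖
      = |Real.log (1 + u) - u| * u ^ (-α - 1) := by
    intro u hu
    rw [norm_mul, Real.norm_eq_abs, Real.norm_eq_abs,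
      abs_of_nonneg (Real.rpow_nonneg hu.le _)]
  have h01 : IntegrableOn (fun u : ℝ => (Real.log (1 + u) - u) * u ^ (-α - 1)) (Ioc 0 1) := by
    apply Integrable.mono' (g := fun u => u ^ (1 - α))
    · have : IntervalIntegrable (fun u : ℝ => u ^ (1 - α)) volume 0 1 :=
        intervalIntegral.intervalIntegrable_rpow' (by linarith)
      rwa [intervalIntegrable_iff_integrableOn_Ioc_of_le zero_le_one] at this
    · exact ((contOn_g α).mono Ioc_subset_Ioi_self).aestronglyMeasurable measurableSet_Ioc
    · rw [ae_restrict_iff' measurableSet_Ioc]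
      filter_upwards with u hu
      rw [hmem u hu.1]
      calc |Real.log (1 + u) - u| * u ^ (-α - 1) ≤ u ^ 2 * u ^ (-α - 1) :=
            mul_le_mul_of_nonneg_right (aux_abs_le_sq hu.1.le) (Real.rpow_nonneg hu.1.le _)
        _ = u ^ (1 - α) := by
            rw [← Real.rpow_natCast u 2, ← Real.rpow_add hu.1]; congr 1; push_cast; ring
  have h1i : IntegrableOn (fun u : ℝ => (Real.log (1 + u) - u) * u ^ (-α - 1)) (Ioi 1) := by
    apply Integrable.mono' (g := fun u => u ^ (-α))
    · exact integrableOn_Ioi_rpow_of_lt (by linarith) one_pos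
    · exact ((contOn_g α).mono (Ioi_subset_Ioi zero_le_one)).aestronglyMeasurable measurableSet_Ioi
    · rw [ae_restrict_iff' measurableSet_Ioi]
      filter_upwards with u hu
      have hu0 : (0:ℝ) < u := lt_trans one_pos hu
      rw [hmem u hu0]
      calc |Real.log (1 + u) - u| * u ^ (-α - 1) ≤ u * u ^ (-α - 1) :=
            mul_le_mul_of_nonneg_right (aux_abs_le_lin hu0.le) (Real.rpow_nonneg hu0.le _)
        _ = u ^ (-α) := by
            nth_rewrite 1 [← Real.rpow_one u]
            rw [← Real.rpow_add hu0]; congr 1; ring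
  have := h01.union h1i
  rwa [Ioc_union_Ioi_eq_Ioi zero_le_one] at this

lemma integrableOn_beta {b : ℝ} (hb : 0 < b) (hb1 : b < 1) :
    IntegrableOn (fun u : ℝ => u ^ (b - 1) / (1 + u)) (Ioi 0) := by
  have hcont : ContinuousOn (fun u : ℝ => u ^ (b - 1) / (1 + u)) (Ioi 0) := by
    apply ContinuousOn.div
    · intro x hx
      exact (Real.continuousAt_rpow_const x _ (Or.inl (ne_of_gt hx))).continuousWithinAt
    · fun_prop
    · intro x hx; have : (0:ℝ) < x := hx; positivity
  have hmem : ∀ u : ℝ, 0 < u → ‖u ^ (b - 1) / (1 + u)‖ = u ^ (b - 1) / (1 + u) := by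
    intro u hu
    rw [Real.norm_eq_abs, abs_of_nonneg]
    positivity
  have h01 : IntegrableOn (fun u : ℝ => u ^ (b - 1) / (1 + u)) (Ioc 0 1) := by
    apply Integrable.mono' (g := fun u => u ^ (b - 1))
    · have : IntervalIntegrable (fun u : ℝ => u ^ (b - 1)) volume 0 1 :=
        intervalIntegral.intervalIntegrable_rpow' (by linarith)
      rwa [intervalIntegrable_iff_integrableOn_Ioc_of_le zero_le_one] at this
    · exact (hcont.mono Ioc_subset_Ioi_self).aestronglyMeasurable measurableSet_Ioc
    · rw [ae_restrict_iff' measurableSet_Ioc]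
      filter_upwards with u hu
      rw [hmem u hu.1]
      exact div_le_self (Real.rpow_nonneg hu.1.le _) (by linarith [hu.1.le])
  have h1i : IntegrableOn (fun u : ℝ => u ^ (b - 1) / (1 + u)) (Ioi 1) := by
    apply Integrable.mono' (g := fun u => u ^ (b - 2))
    · exact integrableOn_Ioi_rpow_of_lt (by linarith) one_pos
    · exact (hcont.mono (Ioi_subset_Ioi zero_le_one)).aestronglyMeasurable measurableSet_Ioi
    · rw [ae_restrict_iff' measurableSet_Ioi]
      filter_upwards with u hu
      have hu0 : (0:ℝ) < u := lt_trans one_pos hu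
      rw [hmem u hu0]
      calc u ^ (b - 1) / (1 + u) ≤ u ^ (b - 1) / u := by
            apply div_le_div_of_nonneg_left (Real.rpow_nonneg hu0.le _) hu0 (by linarith)
        _ = u ^ (b - 2) := by
            rw [div_eq_mul_inv, ← Real.rpow_neg_one u, ← Real.rpow_add hu0]
            congr 1; ring
  have := h01.union h1i
  rwa [Ioc_union_Ioi_eq_Ioi zero_le_one] at this

lemma real_beta {b : ℝ} (hb : 0 < b) (hb1 : b < 1) :
    ∫ x in Ioo (0:ℝ) 1, x ^ (b - 1) * (1 - x) ^ (-b) = π / Real.sin (π * b) := by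
  have hb' : 0 < (1:ℝ) - b := by linarith
  have h1 : Complex.Gamma b * Complex.Gamma ((1 - b : ℝ)) = Complex.betaIntegral b ((1 - b : ℝ)) := by
    have h := Complex.Gamma_mul_Gamma_eq_betaIntegral
      (s := (b : ℂ)) (t := ((1 - b : ℝ) : ℂ)) (by simpa using hb) (by simpa using hb')
    rw [show ((b : ℂ) + ((1 - b : ℝ) : ℂ)) = 1 by push_cast; ring, Complex.Gamma_one, one_mul] at h
    exact h
  have h2 : Complex.betaIntegral b ((1 - b : ℝ))
      = ((∫ x in Ioo (0:ℝ) 1, x ^ (b - 1) * (1 - x) ^ (-b) : ℝ) : ℂ) := by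
    rw [Complex.betaIntegral, intervalIntegral.integral_of_le zero_le_one,
      MeasureTheory.integral_Ioc_eq_integral_Ioo]
    have hpt : ∀ x ∈ Ioo (0:ℝ) 1, (x:ℂ) ^ ((b:ℂ) - 1) * (1 - (x:ℂ)) ^ (((1 - b : ℝ):ℂ) - 1)
        = ((x ^ (b - 1) * (1 - x) ^ (-b) : ℝ) : ℂ) := by
      intro x hx
      have hx0 : (0:ℝ) ≤ x := hx.1.le
      have hx2 : (0:ℝ) ≤ 1 - x := by linarith [hx.2]
      rw [Complex.ofReal_mul, Complex.ofReal_cpow hx0, Complex.ofReal_cpow hx2]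
      push_cast
      ring_nf
    rw [setIntegral_congr_fun measurableSet_Ioo hpt]
    exact integral_ofReal
  have h3 : ((Real.Gamma b * Real.Gamma (1 - b) : ℝ) : ℂ)
      = ((∫ x in Ioo (0:ℝ) 1, x ^ (b - 1) * (1 - x) ^ (-b) : ℝ) : ℂ) := by
    rw [Complex.ofReal_mul, ← Complex.Gamma_ofReal, ← Complex.Gamma_ofReal, ← h2, ← h1]
  have h4 := Complex.ofReal_inj.mp h3
  rw [← h4, Real.Gamma_mul_Gamma_one_sub]

lemma beta_val {b : ℝ} (hb : 0 < b) (hb1 : b < 1) :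
    ∫ u in Ioi (0:ℝ), u ^ (b - 1) / (1 + u) = π / Real.sin (π * b) := by
  have himg : (fun x : ℝ => x / (1 - x)) '' Ioo 0 1 = Ioi 0 := by
    ext u; simp only [mem_image, mem_Ioo, mem_Ioi]
    constructor
    · rintro ⟨x, ⟨hx0, hx1⟩, rfl⟩; exact div_pos hx0 (by linarith)
    · intro hu
      refine ⟨u / (1 + u), ⟨by positivity, ?_⟩, ?_⟩
      · rw [div_lt_one (by linarith)]; linarith
      · have h1u : (1:ℝ) + u ≠ 0 := by positivity
        field_simp
        ring
  have hderiv : ∀ x ∈ Ioo (0:ℝ) 1, HasDerivWithinAt (fun x : ℝ => x / (1 - x))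
      (1 / (1 - x) ^ 2) (Ioo 0 1) x := by
    intro x hx
    have hne : (1:ℝ) - x ≠ 0 := by have := hx.2; intro h; linarith [sub_eq_zero.mp h]
    have h := (hasDerivAt_id x).div ((hasDerivAt_id x).const_sub 1) hne
    refine h.hasDerivWithinAt.congr_deriv ?_
    simp only [id]
    field_simp
    ring
  have hinj : InjOn (fun x : ℝ => x / (1 - x)) (Ioo 0 1) := by
    intro x hx y hy h
    have hx1 : (1:ℝ) - x ≠ 0 := by intro h'; linarith [sub_eq_zero.mp h', hx.2]
    have hy1 : (1:ℝ) - y ≠ 0 := by intro h'; linarith [sub_eq_zero.mp h', hy.2]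
    simp only at h
    field_simp at h
    linarith
  have key := integral_image_eq_integral_abs_deriv_smul measurableSet_Ioo hderiv hinj
      (fun u : ℝ => u ^ (b - 1) / (1 + u))
  rw [himg] at key
  rw [key, ← real_beta hb hb1]
  apply setIntegral_congr_fun measurableSet_Ioo
  intro x hx
  have h1x : (0:ℝ) < 1 - x := by linarith [hx.2]
  have hx0 : (0:ℝ) < x := hx.1
  simp only [smul_eq_mul]
  rw [abs_of_pos (by positivity)]
  rw [show (1:ℝ) + x / (1 - x) = 1 / (1 - x) by field_simp; ring]
  rw [Real.div_rpow hx0.le h1x.le, Real.rpow_neg h1x.le b, Real.rpow_sub h1x b 1, Real.rpow_one]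
  have hB : (1 - x) ^ b ≠ 0 := by positivity
  field_simp

lemma sin_api_neg {α : ℝ} (hα : 1 < α) (hα2 : α < 2) : Real.sin (α * π) < 0 := by
  have hp := Real.pi_pos
  have h1 : 0 < α * π - π := by nlinarith
  have h2 : α * π - π < π := by nlinarith
  have := Real.sin_pos_of_pos_of_lt_pi h1 h2
  rw [Real.sin_sub_pi] at this
  linarith

lemma I_value (α : ℝ) (hα : 1 < α) (hα2 : α < 2) :
    ∫ u in Ioi (0:ℝ), (Real.log (1 + u) - u) * u ^ (-α - 1)
      = π / (α * Real.sin (α * π)) := by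
  have hα0 : (0:ℝ) < α := by linarith
  set U : ℝ → ℝ := fun x => Real.log (1 + x) - x with hU
  set U' : ℝ → ℝ := fun x => -(x / (1 + x)) with hU'
  set V : ℝ → ℝ := fun x => x ^ (-α) / (-α) with hV
  set V' : ℝ → ℝ := fun x => x ^ (-α - 1) with hV'
  have hu : ∀ x ∈ Ioi (0:ℝ), HasDerivAt U (U' x) x := by
    intro x hx
    have h1 : (0:ℝ) < 1 + x := by linarith [mem_Ioi.mp hx]
    have hlog : HasDerivAt (fun x : ℝ => Real.log (1 + x)) (1 / (1 + x)) x := by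
      have := (Real.hasDerivAt_log h1.ne').comp x ((hasDerivAt_id x).const_add 1)
      simpa [Function.comp_def] using this
    have := hlog.sub (hasDerivAt_id x)
    refine this.congr_deriv ?_
    simp only [hU']
    field_simp
    ring
  have hv : ∀ x ∈ Ioi (0:ℝ), HasDerivAt V (V' x) x := by
    intro x hx
    have hx0 : x ≠ 0 := ne_of_gt hx
    have := (Real.hasDerivAt_rpow_const (x := x) (p := -α) (Or.inl hx0)).div_const (-α)
    refine this.congr_deriv ?_
    simp only [hV']
    rw [mul_comm, mul_div_assoc, div_self (by simpa using hα0.ne'), mul_one]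
  have huv' : IntegrableOn (U * V') (Ioi 0) := integrableOn_g α hα hα2
  have hbint : IntegrableOn (fun x : ℝ => x ^ ((2 - α) - 1) / (1 + x) * α⁻¹) (Ioi 0) :=
    (integrableOn_beta (by linarith) (by linarith)).mul_const _
  have hEq : EqOn (fun x : ℝ => x ^ ((2 - α) - 1) / (1 + x) * α⁻¹) (U' * V) (Ioi 0) := by
    intro x hx
    have hx0 : (0:ℝ) < x := hx
    have h1 : (0:ℝ) < 1 + x := by linarith
    simp only [Pi.mul_apply, hU', hV]
    have hαne : α ≠ 0 := hα0.ne'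
    have h1ne : (1:ℝ) + x ≠ 0 := h1.ne'
    have hxp : x ^ ((2 - α) - 1) = x * x ^ (-α) := by
      nth_rewrite 2 [← Real.rpow_one x]
      rw [← Real.rpow_add hx0]
      congr 1; ring
    rw [hxp]
    field_simp
  have hu'v : IntegrableOn (U' * V) (Ioi 0) := hbint.congr_fun hEq measurableSet_Ioi
  have habsV : ∀ x : ℝ, 0 < x → |V x| = x ^ (-α) / α := by
    intro x hx
    simp only [hV, abs_div, abs_neg, abs_of_pos hα0,
      abs_of_nonneg (Real.rpow_nonneg hx.le (-α))]
  have h_zero : Tendsto (U * V) (𝓝[>] (0:ℝ)) (𝓝 0) := by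
    apply squeeze_zero_norm' (a := fun x => x ^ (2 - α) / α)
    · filter_upwards [self_mem_nhdsWithin] with x hx
      have hx0 : (0:ℝ) < x := hx
      rw [Pi.mul_apply, norm_mul, Real.norm_eq_abs, Real.norm_eq_abs, habsV x hx0]
      calc |U x| * (x ^ (-α) / α) ≤ x ^ 2 * (x ^ (-α) / α) := by
            apply mul_le_mul_of_nonneg_right (aux_abs_le_sq hx0.le)
            positivity
        _ = x ^ (2 - α) / α := by
            rw [← Real.rpow_natCast x 2, ← mul_div_assoc, ← Real.rpow_add hx0]
            norm_num [sub_eq_add_neg]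
    · have h0 : Tendsto (fun x : ℝ => x ^ (2 - α)) (𝓝[>] (0:ℝ)) (𝓝 0) := by
        have hc := (Real.continuousAt_rpow_const 0 (2 - α) (Or.inr (by linarith))).tendsto
        rw [Real.zero_rpow (by linarith : (2:ℝ) - α ≠ 0)] at hc
        exact hc.mono_left nhdsWithin_le_nhds
      simpa using h0.div_const α
  have h_infty : Tendsto (U * V) atTop (𝓝 0) := by
    apply squeeze_zero_norm' (a := fun x => x ^ (1 - α) / α)
    · filter_upwards [eventually_gt_atTop 0] with x hx0
      rw [Pi.mul_apply, norm_mul, Real.norm_eq_abs, Real.norm_eq_abs, habsV x hx0]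
      calc |U x| * (x ^ (-α) / α) ≤ x * (x ^ (-α) / α) := by
            apply mul_le_mul_of_nonneg_right (aux_abs_le_lin hx0.le)
            positivity
        _ = x ^ (1 - α) / α := by
            nth_rewrite 1 [← Real.rpow_one x]
            rw [← mul_div_assoc, ← Real.rpow_add hx0]
            congr 2
    · have h0 : Tendsto (fun x : ℝ => x ^ (1 - α)) atTop (𝓝 0) := by
        have := tendsto_rpow_neg_atTop (by linarith : (0:ℝ) < α - 1)
        convert this using 2 with x
        · ring_nf
      simpa using h0.div_const α
  have hkey := integral_Ioi_mul_deriv_eq_deriv_mul hu hv huv' hu'v h_zero h_infty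
  have hJ : ∫ x in Ioi (0:ℝ), U' x * V x = α⁻¹ * (π / Real.sin (π * (2 - α))) := by
    have hc := setIntegral_congr_fun (μ := volume) measurableSet_Ioi hEq
    simp only [Pi.mul_apply] at hc
    rw [← hc, MeasureTheory.integral_mul_const, beta_val (by linarith) (by linarith)]
    ring
  have hsin2 : Real.sin (π * (2 - α)) = -Real.sin (α * π) := by
    have : π * (2 - α) = 2 * π - α * π := by ring
    rw [this, Real.sin_sub]
    simp
  have hsin := sin_api_neg hα hα2
  have hgoal : (∫ x in Ioi (0:ℝ), U x * V' x) = π / (α * Real.sin (α * π)) := by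
    rw [hkey, hJ, hsin2]
    have hαne : α ≠ 0 := hα0.ne'
    have hsne : Real.sin (α * π) ≠ 0 := ne_of_lt hsin
    field_simp
    ring
  exact hgoal

theorem stmt_7 (α s : ℝ) (hα : 1 < α) (hα2 : α < 2) (hs : 0 ≤ s) :
    IntegrableOn (fun t : ℝ => (Real.log (1 + t * s) - t * s) * t ^ (-α - 1))
      (Set.Ioi (0 : ℝ)) volume ∧
    s ^ α = (α * Real.sin (α * Real.pi) / Real.pi) *
      ∫ t in Set.Ioi (0 : ℝ), (Real.log (1 + t * s) - t * s) * t ^ (-α - 1) := by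
  have hα0 : (0:ℝ) < α := by linarith
  rcases eq_or_lt_of_le hs with hs0 | hs0
  · have h0 : (fun t : ℝ => (Real.log (1 + t * s) - t * s) * t ^ (-α - 1))
        = fun _ : ℝ => (0:ℝ) := by
      funext t; rw [← hs0]; simp
    rw [h0]
    constructor
    · exact integrableOn_zero
    · simp [← hs0, Real.zero_rpow hα0.ne']
  · set g := fun u : ℝ => (Real.log (1 + u) - u) * u ^ (-α - 1) with hg
    have hEq : EqOn (fun t : ℝ => (Real.log (1 + t * s) - t * s) * t ^ (-α - 1))
        (fun t : ℝ => s ^ (α + 1) * g (s * t)) (Ioi 0) := by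
      intro t ht
      have ht0 : (0:ℝ) < t := ht
      simp only [hg]
      rw [Real.mul_rpow hs0.le ht0.le, mul_comm s t]
      rw [show s ^ (α + 1) * ((Real.log (1 + t * s) - t * s) * (s ^ (-α - 1) * t ^ (-α - 1)))
          = (s ^ (α + 1) * s ^ (-α - 1)) * ((Real.log (1 + t * s) - t * s) * t ^ (-α - 1))
          by ring, ← Real.rpow_add hs0]
      norm_num
    have h1 : IntegrableOn (fun t : ℝ => g (s * t)) (Ioi 0) := by
      have h := (integrableOn_Ioi_comp_mul_left_iff g 0 hs0).mpr
      rw [mul_zero] at h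
      exact h (integrableOn_g α hα hα2)
    have h2 : IntegrableOn (fun t : ℝ => s ^ (α + 1) * g (s * t)) (Ioi 0) := h1.const_mul _
    have hint : IntegrableOn (fun t : ℝ => (Real.log (1 + t * s) - t * s) * t ^ (-α - 1))
        (Ioi 0) := h2.congr_fun hEq.symm measurableSet_Ioi
    refine ⟨hint, ?_⟩
    have hval : ∫ t in Ioi (0:ℝ), (Real.log (1 + t * s) - t * s) * t ^ (-α - 1)
        = s ^ (α + 1) * (s⁻¹ * (π / (α * Real.sin (α * π)))) := by
      rw [setIntegral_congr_fun measurableSet_Ioi hEq, MeasureTheory.integral_const_mul]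
      have h3 := integral_comp_mul_left_Ioi g 0 hs0
      rw [mul_zero] at h3
      rw [h3, smul_eq_mul, I_value α hα hα2]
    rw [hval]
    have hsin := sin_api_neg hα hα2
    have hsne : Real.sin (α * π) ≠ 0 := ne_of_lt hsin
    rw [Real.rpow_add hs0, Real.rpow_one]
    field_simp
end

section
/- Let x, y be strictly positive probability vectors in ℝ^n. If e_k(x) ≤ e_k(y) for all k = 1,…,n, then the Shannon entropy satisfies −Σ_{i=1}^n x_i log x_i ≤ −Σ_{i=1}^n y_i log y_i. -/
open Finset Real MeasureTheory Filter Set Topology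

namespace Stmt10Aux

noncomputable def h (a t : ℝ) : ℝ := (Real.log (1 + a * t) - a * Real.log (1 + t)) / t ^ 2

noncomputable def Phi (a t : ℝ) : ℝ :=
  (a * Real.log (1 + t) - Real.log (1 + a * t)) / t
    + a * Real.log (1 + t) - a * Real.log (1 + a * t)

lemma hasDerivAt_Phi {a : ℝ} (ha : 0 < a) {t : ℝ} (ht : 0 < t) :
    HasDerivAt (Phi a) (h a t) t := by
  have h1t : (0:ℝ) < 1 + t := by linarith
  have h1at : (0:ℝ) < 1 + a * t := by positivity
  have L1 : HasDerivAt (fun t : ℝ => Real.log (1 + t)) (1 / (1 + t)) t := by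
    simpa using (((hasDerivAt_id t).const_add 1).log h1t.ne')
  have L2 : HasDerivAt (fun t : ℝ => Real.log (1 + a * t)) (a / (1 + a * t)) t := by
    simpa using ((((hasDerivAt_id t).const_mul a).const_add 1).log h1at.ne')
  have D : HasDerivAt (Phi a)
      (((a * (1 / (1 + t)) - a / (1 + a * t)) * t
          - (a * Real.log (1 + t) - Real.log (1 + a * t)) * 1) / t ^ 2
        + a * (1 / (1 + t)) - a * (a / (1 + a * t))) t := by
    exact ((((L1.const_mul a).sub L2).div (hasDerivAt_id t) ht.ne').add
      (L1.const_mul a)).sub (L2.const_mul a)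
  convert D using 1
  unfold h
  field_simp
  ring

lemma tendsto_log_div {c : ℝ} (hc : 0 < c) :
    Tendsto (fun t : ℝ => Real.log (1 + c * t) / t) atTop (𝓝 0) := by
  have h1 : Tendsto (fun t : ℝ => 1 + c * t) atTop atTop :=
    tendsto_atTop_add_const_left _ _ (tendsto_id.const_mul_atTop hc)
  have h3 : Tendsto (fun t : ℝ => Real.log (1 + c * t) / (1 + c * t)) atTop (𝓝 0) :=
    (Real.isLittleO_log_id_atTop.tendsto_div_nhds_zero).comp h1
  have h4 : Tendsto (fun t : ℝ => (1 + c * t) / t) atTop (𝓝 c) := by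
    have h5 : Tendsto (fun t : ℝ => t⁻¹ + c) atTop (𝓝 (0 + c)) :=
      tendsto_inv_atTop_zero.add tendsto_const_nhds
    rw [zero_add] at h5
    refine h5.congr' ?_
    filter_upwards [Filter.Ioi_mem_atTop (0:ℝ)] with t ht
    have htne : t ≠ 0 := (ne_of_gt ht)
    field_simp
  have := h3.mul h4
  rw [zero_mul] at this
  refine this.congr' ?_
  filter_upwards [Filter.Ioi_mem_atTop (0:ℝ)] with t ht
  have ht' : (0:ℝ) < t := ht
  have hpos : (0:ℝ) < 1 + c * t := by nlinarith
  field_simp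

lemma tendsto_Phi {a : ℝ} (ha : 0 < a) :
    Tendsto (Phi a) atTop (𝓝 (-a * Real.log a)) := by
  have t1 : Tendsto (fun t : ℝ => (a * Real.log (1 + t) - Real.log (1 + a * t)) / t)
      atTop (𝓝 0) := by
    have := ((tendsto_log_div one_pos).const_mul a).sub (tendsto_log_div ha)
    rw [mul_zero, sub_zero] at this
    refine this.congr' ?_
    filter_upwards [Filter.Ioi_mem_atTop (0:ℝ)] with t ht
    simp [one_mul]
    ring
  have t2 : Tendsto (fun t : ℝ => a * Real.log (1 + t) - a * Real.log (1 + a * t))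
      atTop (𝓝 (-a * Real.log a)) := by
    have hfrac : Tendsto (fun t : ℝ => (1 + t) / (1 + a * t)) atTop (𝓝 a⁻¹) := by
      have h5 : Tendsto (fun t : ℝ => (t⁻¹ + 1) / (t⁻¹ + a)) atTop (𝓝 ((0+1)/(0+a))) :=
        (tendsto_inv_atTop_zero.add tendsto_const_nhds).div
          (tendsto_inv_atTop_zero.add tendsto_const_nhds) (by simpa using ha.ne')
      rw [zero_add, zero_add, one_div] at h5
      refine h5.congr' ?_
      filter_upwards [Filter.Ioi_mem_atTop (0:ℝ)] with t ht
      have ht' : (0:ℝ) < t := ht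
      have h1 : (0:ℝ) < 1 + a * t := by nlinarith
      have h2 : (0:ℝ) < t⁻¹ + a := by positivity
      rw [div_eq_div_iff h2.ne' h1.ne']
      have htne : t ≠ 0 := (ne_of_gt ht')
      field_simp
    have hlog : Tendsto (fun t : ℝ => Real.log ((1 + t) / (1 + a * t))) atTop
        (𝓝 (Real.log a⁻¹)) :=
      (Real.continuousAt_log (by positivity)).tendsto.comp hfrac
    have := hlog.const_mul a
    rw [Real.log_inv, mul_neg, ← neg_mul] at this
    refine this.congr' ?_
    filter_upwards [Filter.Ioi_mem_atTop (0:ℝ)] with t ht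
    have ht' : (0:ℝ) < t := ht
    have h1 : (0:ℝ) < 1 + t := by linarith
    have h2 : (0:ℝ) < 1 + a * t := by nlinarith
    rw [Real.log_div h1.ne' h2.ne']
    ring
  have := t1.add t2
  rw [zero_add] at this
  refine this.congr ?_
  intro t
  unfold Phi
  ring

lemma Phi_zero (a : ℝ) : Phi a 0 = 0 := by
  unfold Phi
  simp

lemma contWithin_Phi {a : ℝ} (ha : 0 < a) :
    ContinuousWithinAt (Phi a) (Ici 0) 0 := by
  rw [← continuousWithinAt_Ioi_iff_Ici]
  have hψ : HasDerivAt (fun t : ℝ => a * Real.log (1 + t) - Real.log (1 + a * t)) 0 0 := by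
    have L1 : HasDerivAt (fun t : ℝ => Real.log (1 + t)) 1 (0:ℝ) := by
      simpa using (((hasDerivAt_id (0:ℝ)).const_add 1).log (by norm_num))
    have L2 : HasDerivAt (fun t : ℝ => Real.log (1 + a * t)) a (0:ℝ) := by
      simpa using ((((hasDerivAt_id (0:ℝ)).const_mul a).const_add 1).log (by norm_num))
    have := (L1.const_mul a).sub L2
    rw [show a * 1 - a = 0 by ring] at this; exact this
  have hslope : Tendsto (fun t : ℝ => (a * Real.log (1 + t) - Real.log (1 + a * t)) / t)
      (𝓝[>] 0) (𝓝 0) := by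
    have := hasDerivAt_iff_tendsto_slope.mp hψ
    have h2 : Tendsto (slope (fun t : ℝ => a * Real.log (1 + t) - Real.log (1 + a * t)) 0)
        (𝓝[>] 0) (𝓝 0) :=
      this.mono_left (nhdsWithin_mono _ (fun t ht => ne_of_gt ht))
    refine h2.congr ?_
    intro t
    rw [slope_def_field]
    simp
  have hcont : Tendsto (fun t : ℝ => a * Real.log (1 + t) - a * Real.log (1 + a * t))
      (𝓝[>] 0) (𝓝 0) := by
    have c1 : ContinuousAt (fun t : ℝ => a * Real.log (1 + t) - a * Real.log (1 + a * t)) 0 := by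
      have : ContinuousAt (fun t : ℝ => Real.log (1 + t)) 0 :=
        (Real.continuousAt_log (by norm_num)).comp (by fun_prop)
      have h2 : ContinuousAt (fun t : ℝ => Real.log (1 + a * t)) 0 :=
        (Real.continuousAt_log (by norm_num)).comp (by fun_prop)
      exact ((this.const_mul a).sub (h2.const_mul a))
    have := c1.tendsto.mono_left (nhdsWithin_le_nhds (s := Set.Ioi (0:ℝ)))
    simpa using this
  have := hslope.add hcont
  rw [add_zero] at this
  unfold ContinuousWithinAt
  rw [Phi_zero]
  refine this.congr ?_
  intro t
  unfold Phi
  ring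

lemma h_nonneg {a : ℝ} (ha : 0 < a) (ha1 : a ≤ 1) {t : ℝ} (ht : 0 < t) :
    0 ≤ h a t := by
  unfold h
  apply div_nonneg _ (sq_nonneg t)
  rw [sub_nonneg]
  have hconc := (strictConcaveOn_log_Ioi.concaveOn).2 (x := 1 + t) (y := 1)
    (by simp; linarith) (by simp) ha.le (by linarith : (0:ℝ) ≤ 1 - a) (by ring)
  simp only [smul_eq_mul, Real.log_one, mul_zero, add_zero, mul_one] at hconc
  calc a * Real.log (1 + t) ≤ Real.log (a * (1 + t) + (1 - a)) := by
        simpa using hconc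
    _ = Real.log (1 + a * t) := by ring_nf

lemma integrable_h {a : ℝ} (ha : 0 < a) (ha1 : a ≤ 1) :
    IntegrableOn (h a) (Ioi (0:ℝ)) :=
  integrableOn_Ioi_deriv_of_nonneg (contWithin_Phi ha)
    (fun t ht => hasDerivAt_Phi ha ht) (fun t ht => h_nonneg ha ha1 ht) (tendsto_Phi ha)

lemma integral_h {a : ℝ} (ha : 0 < a) (ha1 : a ≤ 1) :
    ∫ t in Ioi (0:ℝ), h a t = -a * Real.log a := by
  have := integral_Ioi_of_hasDerivAt_of_tendsto (contWithin_Phi ha)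
    (fun t ht => hasDerivAt_Phi ha ht) (integrable_h ha ha1) (tendsto_Phi ha)
  rw [Phi_zero, sub_zero] at this
  exact this

end Stmt10Aux

namespace Stmt10Aux

lemma esymm_zero (n : ℕ) (x : Fin n → ℝ) : esymm n 0 x = 1 := by
  unfold esymm
  rw [Finset.powersetCard_zero, Finset.sum_singleton, Finset.prod_empty]

lemma prod_expand (n : ℕ) (x : Fin n → ℝ) (t : ℝ) :
    ∏ i, (1 + x i * t) = ∑ k ∈ Finset.range (n + 1), esymm n k x * t ^ k := by
  have step1 : ∏ i, (1 + x i * t) = ∏ i, ((x i * t) + 1) := by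
    refine Finset.prod_congr rfl fun i _ => by ring
  rw [step1, Finset.prod_add]
  simp only [Finset.prod_const_one, mul_one, Finset.prod_mul_distrib, Finset.prod_const]
  rw [Finset.powerset_card_disjiUnion]
  refine Eq.trans (Finset.sum_disjiUnion ..) ?_
  rw [Finset.card_univ, Fintype.card_fin]
  refine Finset.sum_congr rfl fun k _ => ?_
  rw [esymm, Finset.sum_mul]
  refine Finset.sum_congr rfl fun s hs => ?_
  rw [(Finset.mem_powersetCard.mp hs).2]

lemma prod_le {n : ℕ} {x y : Fin n → ℝ} {t : ℝ} (ht : 0 ≤ t)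
    (hE : ∀ k, 1 ≤ k → k ≤ n → esymm n k x ≤ esymm n k y) :
    ∏ i, (1 + x i * t) ≤ ∏ i, (1 + y i * t) := by
  rw [prod_expand, prod_expand]
  refine Finset.sum_le_sum fun k hk => ?_
  rcases Nat.eq_zero_or_pos k with rfl | hk1
  · rw [esymm_zero, esymm_zero]
  · refine mul_le_mul_of_nonneg_right (hE k hk1 ?_) (pow_nonneg ht k)
    exact Nat.lt_succ_iff.mp (Finset.mem_range.mp hk)

lemma sum_h_eq {n : ℕ} {x : Fin n → ℝ} (hx : ∀ i, 0 < x i) (hx1 : ∑ i, x i = 1)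
    {t : ℝ} (ht : 0 < t) :
    ∑ i, h (x i) t = (Real.log (∏ i, (1 + x i * t)) - Real.log (1 + t)) / t ^ 2 := by
  unfold h
  rw [← Finset.sum_div]
  congr 1
  rw [Finset.sum_sub_distrib, ← Finset.sum_mul, hx1, one_mul,
    Real.log_prod (fun i _ => ?_)]
  have : (0:ℝ) < 1 + x i * t := by have := mul_pos (hx i) ht; linarith
  exact this.ne'

end Stmt10Aux

open Stmt10Aux

theorem stmt_10 (n : ℕ) (x y : Fin n → ℝ)
    (hx : ∀ i, 0 < x i) (hy : ∀ i, 0 < y i)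
    (hx1 : ∑ i, x i = 1) (hy1 : ∑ i, y i = 1)
    (hE : ∀ k, 1 ≤ k → k ≤ n → esymm n k x ≤ esymm n k y) :
    -∑ i, x i * Real.log (x i) ≤ -∑ i, y i * Real.log (y i) := by
  have hxle : ∀ i, x i ≤ 1 := fun i =>
    hx1 ▸ Finset.single_le_sum (fun j _ => (hx j).le) (Finset.mem_univ i)
  have hyle : ∀ i, y i ≤ 1 := fun i =>
    hy1 ▸ Finset.single_le_sum (fun j _ => (hy j).le) (Finset.mem_univ i)
  have hintx : ∀ i, IntegrableOn (h (x i)) (Set.Ioi (0:ℝ)) :=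
    fun i => integrable_h (hx i) (hxle i)
  have hinty : ∀ i, IntegrableOn (h (y i)) (Set.Ioi (0:ℝ)) :=
    fun i => integrable_h (hy i) (hyle i)
  have entx : -∑ i, x i * Real.log (x i) = ∫ t in Set.Ioi (0:ℝ), ∑ i, h (x i) t := by
    rw [integral_finset_sum _ (fun i _ => hintx i)]
    rw [← Finset.sum_neg_distrib]
    refine Finset.sum_congr rfl fun i _ => ?_
    rw [integral_h (hx i) (hxle i)]
    ring
  have enty : -∑ i, y i * Real.log (y i) = ∫ t in Set.Ioi (0:ℝ), ∑ i, h (y i) t := by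
    rw [integral_finset_sum _ (fun i _ => hinty i)]
    rw [← Finset.sum_neg_distrib]
    refine Finset.sum_congr rfl fun i _ => ?_
    rw [integral_h (hy i) (hyle i)]
    ring
  rw [entx, enty]
  refine setIntegral_mono_on (integrable_finset_sum _ (fun i _ => hintx i))
    (integrable_finset_sum _ (fun i _ => hinty i)) measurableSet_Ioi ?_
  intro t ht
  rw [sum_h_eq hx hx1 ht, sum_h_eq hy hy1 ht]
  have ht' : (0:ℝ) < t := ht
  have hpx : 0 < ∏ i, (1 + x i * t) :=
    Finset.prod_pos fun i _ => by nlinarith [mul_pos (hx i) ht']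
  have hprod : ∏ i, (1 + x i * t) ≤ ∏ i, (1 + y i * t) := prod_le ht'.le hE
  gcongr
end

section
/- Let X, Y be Hermitian positive definite matrices with unit trace and α ∈ (0,1) ∪ (1,2]. If e_k(λ(X)) ≤ e_k(λ(Y)) for k = 1,…,n, then the quantum Rényi entropy satisfies H_α(X) ≤ H_α(Y), where H_α(X) = (1/(1−α)) log(tr X^α). -/
open Finset Real Matrix
open scoped ComplexOrder

/-- Quantum Rényi entropy of order `α` of a unit-trace positive definite matrix `X`,
expressed via its eigenvalues: `H_α(X) = (1/(1−α)) log (tr X^α)`, where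
`tr X^α = ∑ i, λᵢ(X)^α`. -/
noncomputable def quantumRenyi (n : ℕ) (α : ℝ) {X : Matrix (Fin n) (Fin n) ℂ}
    (hX : X.IsHermitian) : ℝ :=
  (1 / (1 - α)) * Real.log (∑ i, (hX.eigenvalues i) ^ α)

open MeasureTheory

/- ### Auxiliary lemmas -/

lemma aux_trace_eq_sum_eigen {n : ℕ} {A : Matrix (Fin n) (Fin n) ℂ} (hA : A.IsHermitian) :
    A.trace = ∑ i, (hA.eigenvalues i : ℂ) := by
  exact hA.trace_eq_sum_eigenvalues

lemma aux_prod_expand (n : ℕ) (t : ℝ) (x : Fin n → ℝ) :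
    ∏ i, (1 + t * x i) = ∑ k ∈ Finset.range (n + 1), t ^ k * esymm n k x := by
  have h := Finset.prod_add (fun i : Fin n => t * x i) (fun _ => (1 : ℝ)) Finset.univ
  simp only [Finset.prod_const_one, mul_one] at h
  have h2 : ∏ i, (1 + t * x i) =
      ∑ s ∈ (Finset.univ : Finset (Fin n)).powerset, ∏ i ∈ s, (t * x i) := by
    simpa [add_comm] using h
  rw [h2, Finset.sum_powerset]
  rw [Finset.card_univ, Fintype.card_fin]
  refine Finset.sum_congr rfl fun k _ => ?_
  rw [esymm, Finset.mul_sum]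
  refine Finset.sum_congr rfl fun s hs => ?_
  rw [Finset.prod_mul_distrib, Finset.prod_const, (Finset.mem_powersetCard.mp hs).2]

lemma aux_log_sum_le {n : ℕ} {x y : Fin n → ℝ} (hx : ∀ i, 0 < x i) (hy : ∀ i, 0 < y i)
    (hE : ∀ k, 1 ≤ k → k ≤ n → esymm n k x ≤ esymm n k y) {t : ℝ} (ht : 0 < t) :
    ∑ i, Real.log (1 + t * x i) ≤ ∑ i, Real.log (1 + t * y i) := by
  have hxf : ∀ i : Fin n, (0:ℝ) < 1 + t * x i := fun i => by nlinarith [hx i]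
  have hyf : ∀ i : Fin n, (0:ℝ) < 1 + t * y i := fun i => by nlinarith [hy i]
  rw [← Real.log_prod (fun i _ => (hxf i).ne'), ← Real.log_prod (fun i _ => (hyf i).ne')]
  refine Real.log_le_log (Finset.prod_pos fun i _ => hxf i) ?_
  rw [aux_prod_expand, aux_prod_expand]
  refine Finset.sum_le_sum fun k hk => ?_
  rcases Nat.eq_zero_or_pos k with rfl | hk1
  · simp [esymm]
  · exact mul_le_mul_of_nonneg_left
      (hE k hk1 (Nat.lt_succ_iff.mp (Finset.mem_range.mp hk)))
      (pow_nonneg ht.le k)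

lemma aux_integrable_G1 {α : ℝ} (hα : α ∈ Set.Ioo (0:ℝ) 1) :
    IntegrableOn (fun t => Real.log (1 + t) * t ^ (-1 - α)) (Set.Ioi 0) := by
  obtain ⟨hα0, hα1⟩ := hα
  have hcont : ContinuousOn (fun t : ℝ => Real.log (1 + t) * t ^ (-1 - α)) (Set.Ioi 0) := by
    refine ContinuousOn.mul ?_ ?_
    · exact ContinuousOn.log (by fun_prop) (fun t ht => by
        have := Set.mem_Ioi.mp ht; positivity)
    · exact ContinuousOn.rpow_const continuousOn_id
        (fun t ht => Or.inl (Set.mem_Ioi.mp ht).ne')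
  rw [← Set.Ioc_union_Ioi_eq_Ioi (zero_le_one (α := ℝ))]
  refine IntegrableOn.union ?_ ?_
  · -- on (0,1]: dominated by t ^ (-α)
    have hint : IntegrableOn (fun t : ℝ => t ^ (-α)) (Set.Ioc 0 1) :=
      (intervalIntegrable_iff_integrableOn_Ioc_of_le zero_le_one).mp
        (intervalIntegral.intervalIntegrable_rpow' (by linarith))
    refine Integrable.mono' hint
      ((hcont.mono (Set.Ioc_subset_Ioi_self)).aestronglyMeasurable measurableSet_Ioc) ?_
    filter_upwards [ae_restrict_mem measurableSet_Ioc] with t ht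
    have ht0 : (0:ℝ) < t := ht.1
    have hlog : Real.log (1 + t) ≤ t := by
      have := Real.log_le_sub_one_of_pos (show (0:ℝ) < 1 + t by linarith)
      linarith
    have hlog0 : 0 ≤ Real.log (1 + t) := Real.log_nonneg (by linarith)
    rw [Real.norm_eq_abs, abs_of_nonneg (mul_nonneg hlog0 (Real.rpow_nonneg ht0.le _))]
    calc Real.log (1 + t) * t ^ (-1 - α) ≤ t * t ^ (-1 - α) :=
          mul_le_mul_of_nonneg_right hlog (Real.rpow_nonneg ht0.le _)
      _ = t ^ (-α) := by
          nth_rewrite 1 [← Real.rpow_one t]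
          rw [← Real.rpow_add ht0]
          congr 1
          ring
  · -- on (1,∞): log (1+t) ≤ (2^(α/2)/(α/2)) * t^(α/2)
    have hint : IntegrableOn (fun t : ℝ => (2 ^ (α/2) / (α/2)) * t ^ (α/2 - 1 - α))
        (Set.Ioi 1) := by
      exact (integrableOn_Ioi_rpow_of_lt (by linarith) one_pos).const_mul _
    refine Integrable.mono' hint
      ((hcont.mono (Set.Ioi_subset_Ioi zero_le_one)).aestronglyMeasurable
        measurableSet_Ioi) ?_
    filter_upwards [ae_restrict_mem measurableSet_Ioi] with t ht
    have ht1 : (1:ℝ) < t := ht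
    have ht0 : (0:ℝ) < t := lt_trans one_pos ht1
    have hε : (0:ℝ) < α/2 := by linarith
    have hlog : Real.log (1 + t) ≤ (2 ^ (α/2) / (α/2)) * t ^ (α/2) := by
      calc Real.log (1 + t) ≤ (1 + t) ^ (α/2) / (α/2) :=
            Real.log_le_rpow_div (by linarith) hε
        _ ≤ (2 * t) ^ (α/2) / (α/2) := by
            gcongr
            linarith
        _ = (2 ^ (α/2) / (α/2)) * t ^ (α/2) := by
            rw [Real.mul_rpow (by norm_num) ht0.le]
            ring
    have hlog0 : 0 ≤ Real.log (1 + t) := Real.log_nonneg (by linarith)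
    rw [Real.norm_eq_abs, abs_of_nonneg (mul_nonneg hlog0 (Real.rpow_nonneg ht0.le _))]
    calc Real.log (1 + t) * t ^ (-1 - α)
        ≤ ((2 ^ (α/2) / (α/2)) * t ^ (α/2)) * t ^ (-1 - α) :=
          mul_le_mul_of_nonneg_right hlog (Real.rpow_nonneg ht0.le _)
      _ = (2 ^ (α/2) / (α/2)) * t ^ (α/2 - 1 - α) := by
          rw [mul_assoc, ← Real.rpow_add ht0]
          ring_nf

lemma aux_integrable_G2 {α : ℝ} (hα : α ∈ Set.Ioo (1:ℝ) 2) :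
    IntegrableOn (fun t => (t - Real.log (1 + t)) * t ^ (-1 - α)) (Set.Ioi 0) := by
  obtain ⟨hα1, hα2⟩ := hα
  have hcont : ContinuousOn (fun t : ℝ => (t - Real.log (1 + t)) * t ^ (-1 - α)) (Set.Ioi 0) := by
    refine ContinuousOn.mul (ContinuousOn.sub continuousOn_id ?_) ?_
    · exact ContinuousOn.log (by fun_prop) (fun t ht => by
        have := Set.mem_Ioi.mp ht; positivity)
    · exact ContinuousOn.rpow_const continuousOn_id
        (fun t ht => Or.inl (Set.mem_Ioi.mp ht).ne')
  have hsub_nonneg : ∀ t : ℝ, 0 < t → 0 ≤ t - Real.log (1 + t) := by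
    intro t ht
    have := Real.log_le_sub_one_of_pos (show (0:ℝ) < 1 + t by linarith)
    linarith
  rw [← Set.Ioc_union_Ioi_eq_Ioi (zero_le_one (α := ℝ))]
  refine IntegrableOn.union ?_ ?_
  · -- on (0,1]: t - log(1+t) ≤ t^2, dominated by t ^ (1-α)
    have hint : IntegrableOn (fun t : ℝ => t ^ (1-α)) (Set.Ioc 0 1) :=
      (intervalIntegrable_iff_integrableOn_Ioc_of_le zero_le_one).mp
        (intervalIntegral.intervalIntegrable_rpow' (by linarith))
    refine Integrable.mono' hint
      ((hcont.mono (Set.Ioc_subset_Ioi_self)).aestronglyMeasurable measurableSet_Ioc) ?_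
    filter_upwards [ae_restrict_mem measurableSet_Ioc] with t ht
    have ht0 : (0:ℝ) < t := ht.1
    have h1t : (0:ℝ) < 1 + t := by linarith
    have hquad : t - Real.log (1 + t) ≤ t ^ 2 := by
      have hinv : Real.log ((1 + t)⁻¹) ≤ (1 + t)⁻¹ - 1 :=
        Real.log_le_sub_one_of_pos (by positivity)
      rw [Real.log_inv] at hinv
      have hmul : (1 + t)⁻¹ * (1 + t) = 1 := inv_mul_cancel₀ h1t.ne'
      have hinv2 : (1 + t)⁻¹ ≤ 1 - t + t ^ 2 := by
        nlinarith [inv_nonneg.mpr h1t.le, sq_nonneg t]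
      linarith
    rw [Real.norm_eq_abs,
      abs_of_nonneg (mul_nonneg (hsub_nonneg t ht0) (Real.rpow_nonneg ht0.le _))]
    calc (t - Real.log (1 + t)) * t ^ (-1 - α) ≤ t ^ 2 * t ^ (-1 - α) :=
          mul_le_mul_of_nonneg_right hquad (Real.rpow_nonneg ht0.le _)
      _ = t ^ (1 - α) := by
          rw [show (t:ℝ) ^ 2 = t ^ (2:ℝ) by rw [← Real.rpow_natCast t 2]; norm_num,
            ← Real.rpow_add ht0]
          congr 1
          ring
  · -- on (1,∞): t - log(1+t) ≤ t, dominated by t^(-α)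
    have hint : IntegrableOn (fun t : ℝ => t ^ (-α)) (Set.Ioi 1) :=
      integrableOn_Ioi_rpow_of_lt (by linarith) one_pos
    refine Integrable.mono' hint
      ((hcont.mono (Set.Ioi_subset_Ioi zero_le_one)).aestronglyMeasurable
        measurableSet_Ioi) ?_
    filter_upwards [ae_restrict_mem measurableSet_Ioi] with t ht
    have ht0 : (0:ℝ) < t := lt_trans one_pos ht
    have hlog0 : 0 ≤ Real.log (1 + t) := Real.log_nonneg (by linarith)
    rw [Real.norm_eq_abs,
      abs_of_nonneg (mul_nonneg (hsub_nonneg t ht0) (Real.rpow_nonneg ht0.le _))]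
    calc (t - Real.log (1 + t)) * t ^ (-1 - α) ≤ t * t ^ (-1 - α) :=
          mul_le_mul_of_nonneg_right (by linarith) (Real.rpow_nonneg ht0.le _)
      _ = t ^ (-α) := by
          nth_rewrite 1 [← Real.rpow_one t]
          rw [← Real.rpow_add ht0]
          congr 1
          ring

/-- Scaling: if `F t = x^(1+α) * G (x*t)` on `Ioi 0` then `∫ F = x^α * ∫ G`. -/
lemma aux_rep {α : ℝ} {G : ℝ → ℝ} (hG : IntegrableOn G (Set.Ioi 0)) {x : ℝ} (hx : 0 < x)
    (F : ℝ → ℝ) (hF : ∀ t ∈ Set.Ioi (0:ℝ), F t = x ^ (1+α) * G (x * t)) :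
    IntegrableOn F (Set.Ioi 0) ∧
      ∫ t in Set.Ioi 0, F t = x ^ α * ∫ t in Set.Ioi 0, G t := by
  have hint : IntegrableOn (fun t => G (x * t)) (Set.Ioi 0) := by
    have := (integrableOn_Ioi_comp_mul_left_iff G 0 hx).mpr (by simpa using hG)
    simpa using this
  have h1 : IntegrableOn F (Set.Ioi 0) :=
    MeasureTheory.IntegrableOn.congr_fun (hint.const_mul (x ^ (1+α)))
      (fun t ht => (hF t ht).symm) measurableSet_Ioi
  refine ⟨h1, ?_⟩
  rw [setIntegral_congr_fun measurableSet_Ioi (fun t ht => hF t ht)]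
  rw [integral_const_mul, integral_comp_mul_left_Ioi G 0 hx, mul_zero, smul_eq_mul, ← mul_assoc]
  congr 1
  rw [← Real.rpow_neg_one x, ← Real.rpow_add hx]
  ring_nf

lemma aux_support_pos {G : ℝ → ℝ} (hG : IntegrableOn G (Set.Ioi 0))
    (hpos : ∀ t : ℝ, 0 < t → 0 < G t) : 0 < ∫ t in Set.Ioi 0, G t := by
  rw [setIntegral_pos_iff_support_of_nonneg_ae ?_ hG]
  · refine lt_of_lt_of_le ?_ (measure_mono (show Set.Ioi 0 ⊆ Function.support G ∩ Set.Ioi 0 from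
      fun t ht => ⟨(hpos t ht).ne', ht⟩))
    rw [Real.volume_Ioi]
    exact ENNReal.zero_lt_top
  · filter_upwards [ae_restrict_mem measurableSet_Ioi] with t ht
    exact (hpos t ht).le

lemma aux_sum_rpow_le_of_lt_one {n : ℕ} {α : ℝ} (hα : α ∈ Set.Ioo (0:ℝ) 1)
    {x y : Fin n → ℝ} (hx : ∀ i, 0 < x i) (hy : ∀ i, 0 < y i)
    (hlog : ∀ t : ℝ, 0 < t → ∑ i, Real.log (1 + t * x i) ≤ ∑ i, Real.log (1 + t * y i)) :
    ∑ i, x i ^ α ≤ ∑ i, y i ^ α := by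
  set G : ℝ → ℝ := fun t => Real.log (1 + t) * t ^ (-1 - α) with hGdef
  have hG : IntegrableOn G (Set.Ioi 0) := aux_integrable_G1 hα
  have hI : 0 < ∫ t in Set.Ioi 0, G t := by
    refine aux_support_pos hG fun t ht => ?_
    exact mul_pos (Real.log_pos (by linarith)) (Real.rpow_pos_of_pos ht _)
  have hrep : ∀ z : ℝ, 0 < z →
      IntegrableOn (fun t => Real.log (1 + t * z) * t ^ (-1 - α)) (Set.Ioi 0) ∧
      ∫ t in Set.Ioi 0, Real.log (1 + t * z) * t ^ (-1 - α)
        = z ^ α * ∫ t in Set.Ioi 0, G t := by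
    intro z hz
    refine aux_rep hG hz _ fun t ht => ?_
    have ht0 : (0:ℝ) < t := ht
    have hzz : z ^ (1+α) * z ^ (-1-α) = 1 := by
      rw [← Real.rpow_add hz]; norm_num
    rw [hGdef]
    simp only
    rw [Real.mul_rpow hz.le ht0.le, mul_comm z t]
    linear_combination (-(Real.log (1 + t * z) * t ^ (-1 - α))) * hzz
  have hix : ∀ i : Fin n, IntegrableOn
      (fun t => Real.log (1 + t * x i) * t ^ (-1 - α)) (Set.Ioi 0) := fun i => (hrep _ (hx i)).1
  have hiy : ∀ i : Fin n, IntegrableOn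
      (fun t => Real.log (1 + t * y i) * t ^ (-1 - α)) (Set.Ioi 0) := fun i => (hrep _ (hy i)).1
  have key : (∑ i, x i ^ α) * ∫ t in Set.Ioi 0, G t ≤
      (∑ i, y i ^ α) * ∫ t in Set.Ioi 0, G t := by
    rw [Finset.sum_mul, Finset.sum_mul]
    calc ∑ i, (x i ^ α * ∫ t in Set.Ioi 0, G t)
        = ∫ t in Set.Ioi 0, ∑ i, Real.log (1 + t * x i) * t ^ (-1 - α) := by
          rw [integral_finset_sum _ (fun i _ => hix i)]
          exact (Finset.sum_congr rfl fun i _ => ((hrep _ (hx i)).2).symm)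
      _ ≤ ∫ t in Set.Ioi 0, ∑ i, Real.log (1 + t * y i) * t ^ (-1 - α) := by
          refine setIntegral_mono_on (integrable_finset_sum _ (fun i _ => hix i))
            (integrable_finset_sum _ (fun i _ => hiy i)) measurableSet_Ioi fun t ht => ?_
          rw [← Finset.sum_mul, ← Finset.sum_mul]
          exact mul_le_mul_of_nonneg_right (hlog t ht)
            (Real.rpow_nonneg (le_of_lt ht) _)
      _ = ∑ i, (y i ^ α * ∫ t in Set.Ioi 0, G t) := by
          rw [integral_finset_sum _ (fun i _ => hiy i)]
          exact Finset.sum_congr rfl fun i _ => (hrep _ (hy i)).2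
  exact le_of_mul_le_mul_right key hI

lemma aux_sum_rpow_ge_of_mem_Ioo {n : ℕ} {α : ℝ} (hα : α ∈ Set.Ioo (1:ℝ) 2)
    {x y : Fin n → ℝ} (hx : ∀ i, 0 < x i) (hy : ∀ i, 0 < y i)
    (hxs : ∑ i, x i = 1) (hys : ∑ i, y i = 1)
    (hlog : ∀ t : ℝ, 0 < t → ∑ i, Real.log (1 + t * x i) ≤ ∑ i, Real.log (1 + t * y i)) :
    ∑ i, y i ^ α ≤ ∑ i, x i ^ α := by
  set G : ℝ → ℝ := fun t => (t - Real.log (1 + t)) * t ^ (-1 - α) with hGdef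
  have hG : IntegrableOn G (Set.Ioi 0) := aux_integrable_G2 hα
  have hI : 0 < ∫ t in Set.Ioi 0, G t := by
    refine aux_support_pos hG fun t ht => ?_
    have : Real.log (1 + t) < t := by
      have := Real.log_lt_sub_one_of_pos (show (0:ℝ) < 1 + t by linarith)
        (by intro h; nlinarith [h])
      linarith
    exact mul_pos (by linarith) (Real.rpow_pos_of_pos ht _)
  have hrep : ∀ z : ℝ, 0 < z →
      IntegrableOn (fun t => (t * z - Real.log (1 + t * z)) * t ^ (-1 - α)) (Set.Ioi 0) ∧
      ∫ t in Set.Ioi 0, (t * z - Real.log (1 + t * z)) * t ^ (-1 - α)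
        = z ^ α * ∫ t in Set.Ioi 0, G t := by
    intro z hz
    refine aux_rep hG hz _ fun t ht => ?_
    have ht0 : (0:ℝ) < t := ht
    have hzz : z ^ (1+α) * z ^ (-1-α) = 1 := by
      rw [← Real.rpow_add hz]; norm_num
    rw [hGdef]
    simp only
    rw [Real.mul_rpow hz.le ht0.le, mul_comm z t]
    linear_combination (-((t * z - Real.log (1 + t * z)) * t ^ (-1 - α))) * hzz
  have hix : ∀ i : Fin n, IntegrableOn
      (fun t => (t * x i - Real.log (1 + t * x i)) * t ^ (-1 - α)) (Set.Ioi 0) :=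
    fun i => (hrep _ (hx i)).1
  have hiy : ∀ i : Fin n, IntegrableOn
      (fun t => (t * y i - Real.log (1 + t * y i)) * t ^ (-1 - α)) (Set.Ioi 0) :=
    fun i => (hrep _ (hy i)).1
  have key : (∑ i, y i ^ α) * ∫ t in Set.Ioi 0, G t ≤
      (∑ i, x i ^ α) * ∫ t in Set.Ioi 0, G t := by
    rw [Finset.sum_mul, Finset.sum_mul]
    calc ∑ i, (y i ^ α * ∫ t in Set.Ioi 0, G t)
        = ∫ t in Set.Ioi 0, ∑ i, (t * y i - Real.log (1 + t * y i)) * t ^ (-1 - α) := by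
          rw [integral_finset_sum _ (fun i _ => hiy i)]
          exact (Finset.sum_congr rfl fun i _ => ((hrep _ (hy i)).2).symm)
      _ ≤ ∫ t in Set.Ioi 0, ∑ i, (t * x i - Real.log (1 + t * x i)) * t ^ (-1 - α) := by
          refine setIntegral_mono_on (integrable_finset_sum _ (fun i _ => hiy i))
            (integrable_finset_sum _ (fun i _ => hix i)) measurableSet_Ioi fun t ht => ?_
          rw [← Finset.sum_mul, ← Finset.sum_mul]
          refine mul_le_mul_of_nonneg_right ?_ (Real.rpow_nonneg (le_of_lt ht) _)
          have hxx : ∑ i, (t * x i - Real.log (1 + t * x i))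
              = t - ∑ i, Real.log (1 + t * x i) := by
            rw [Finset.sum_sub_distrib, ← Finset.mul_sum, hxs, mul_one]
          have hyy : ∑ i, (t * y i - Real.log (1 + t * y i))
              = t - ∑ i, Real.log (1 + t * y i) := by
            rw [Finset.sum_sub_distrib, ← Finset.mul_sum, hys, mul_one]
          rw [hxx, hyy]
          linarith [hlog t ht]
      _ = ∑ i, (x i ^ α * ∫ t in Set.Ioi 0, G t) := by
          rw [integral_finset_sum _ (fun i _ => hix i)]
          exact Finset.sum_congr rfl fun i _ => (hrep _ (hx i)).2
  exact le_of_mul_le_mul_right key hI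

lemma aux_sum_rpow_ge {n : ℕ} {α : ℝ} (hα : α ∈ Set.Ioc (1:ℝ) 2)
    {x y : Fin n → ℝ} (hx : ∀ i, 0 < x i) (hy : ∀ i, 0 < y i)
    (hxs : ∑ i, x i = 1) (hys : ∑ i, y i = 1)
    (hlog : ∀ t : ℝ, 0 < t → ∑ i, Real.log (1 + t * x i) ≤ ∑ i, Real.log (1 + t * y i)) :
    ∑ i, y i ^ α ≤ ∑ i, x i ^ α := by
  rcases lt_or_eq_of_le hα.2 with h2 | h2
  · exact aux_sum_rpow_ge_of_mem_Ioo ⟨hα.1, h2⟩ hx hy hxs hys hlog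
  · -- α = 2 : take the limit β → 2⁻ of the result on (1,2)
    subst h2
    have hcont : ∀ z : ℝ, 0 < z → Continuous fun β : ℝ => z ^ β := by
      intro z hz
      have : (fun β : ℝ => z ^ β) = fun β => Real.exp (Real.log z * β) := by
        funext β; rw [Real.rpow_def_of_pos hz]
      rw [this]; fun_prop
    have hty : Filter.Tendsto (fun β : ℝ => ∑ i, y i ^ β) (nhdsWithin 2 (Set.Iio 2))
        (nhds (∑ i, y i ^ (2:ℝ))) := by
      refine Filter.Tendsto.mono_left ?_ nhdsWithin_le_nhds
      exact tendsto_finset_sum _ fun i _ => ((hcont _ (hy i)).tendsto 2)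
    have htx : Filter.Tendsto (fun β : ℝ => ∑ i, x i ^ β) (nhdsWithin 2 (Set.Iio 2))
        (nhds (∑ i, x i ^ (2:ℝ))) := by
      refine Filter.Tendsto.mono_left ?_ nhdsWithin_le_nhds
      exact tendsto_finset_sum _ fun i _ => ((hcont _ (hx i)).tendsto 2)
    refine le_of_tendsto_of_tendsto hty htx ?_
    filter_upwards [Ioo_mem_nhdsLT_of_mem (show (2:ℝ) ∈ Set.Ioc 1 2 by norm_num)] with β hβ
    exact aux_sum_rpow_ge_of_mem_Ioo hβ hx hy hxs hys hlog

theorem stmt_16 (n : ℕ) (X Y : Matrix (Fin n) (Fin n) ℂ)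
    (hX : X.PosDef) (hY : Y.PosDef)
    (hXtr : X.trace = 1) (hYtr : Y.trace = 1)
    (α : ℝ) (hα : α ∈ Set.Ioo (0 : ℝ) 1 ∪ Set.Ioc 1 2)
    (hE : ∀ k, 1 ≤ k → k ≤ n →
      esymm n k hX.1.eigenvalues ≤ esymm n k hY.1.eigenvalues) :
    quantumRenyi n α hX.1 ≤ quantumRenyi n α hY.1 := by
  rcases Nat.eq_zero_or_pos n with rfl | hn
  · simp [quantumRenyi]
  set x : Fin n → ℝ := hX.1.eigenvalues with hxdef
  set y : Fin n → ℝ := hY.1.eigenvalues with hydef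
  have hxpos : ∀ i, 0 < x i := hX.eigenvalues_pos
  have hypos : ∀ i, 0 < y i := hY.eigenvalues_pos
  have hxs : ∑ i, x i = 1 := by
    have h := aux_trace_eq_sum_eigen hX.1
    rw [hXtr] at h
    exact_mod_cast h.symm
  have hys : ∑ i, y i = 1 := by
    have h := aux_trace_eq_sum_eigen hY.1
    rw [hYtr] at h
    exact_mod_cast h.symm
  have hlog : ∀ t : ℝ, 0 < t →
      ∑ i, Real.log (1 + t * x i) ≤ ∑ i, Real.log (1 + t * y i) :=
    fun t ht => aux_log_sum_le hxpos hypos hE ht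
  have hSx : 0 < ∑ i, x i ^ α :=
    Finset.sum_pos (fun i _ => Real.rpow_pos_of_pos (hxpos i) _)
      (Finset.univ_nonempty_iff.mpr (Fin.pos_iff_nonempty.mp hn))
  have hSy : 0 < ∑ i, y i ^ α :=
    Finset.sum_pos (fun i _ => Real.rpow_pos_of_pos (hypos i) _)
      (Finset.univ_nonempty_iff.mpr (Fin.pos_iff_nonempty.mp hn))
  unfold quantumRenyi
  rcases hα with hα | hα
  · -- 0 < α < 1 : coefficient positive, sums increase
    have hle : ∑ i, x i ^ α ≤ ∑ i, y i ^ α :=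
      aux_sum_rpow_le_of_lt_one hα hxpos hypos hlog
    have hc : (0:ℝ) ≤ 1 / (1 - α) := by
      have : (0:ℝ) < 1 - α := by linarith [hα.2]
      positivity
    exact mul_le_mul_of_nonneg_left (Real.log_le_log hSx hle) hc
  · -- 1 < α ≤ 2 : coefficient negative, sums decrease
    have hge : ∑ i, y i ^ α ≤ ∑ i, x i ^ α :=
      aux_sum_rpow_ge hα hxpos hypos hxs hys hlog
    have hc : 1 / (1 - α) ≤ 0 := by
      have : 1 - α < 0 := by linarith [hα.1]
      exact le_of_lt (div_neg_of_pos_of_neg one_pos this)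
    exact mul_le_mul_of_nonpos_left (Real.log_le_log hSy hge) hc
end

section
/- Let x ∈ ℝ^n be a vector of distinct positive numbers with Σ_i x_i = 1. Then the subentropy Q(x) = −Σ_{i=1}^n (x_i^n / ∏_{j≠i}(x_i − x_j)) log x_i satisfies Q(x) = −∫_0^∞ [ t^n / ∏_{j=1}^n (t + x_j) − t/(1+t) ] dt. -/
open Finset Real MeasureTheory

/-- Subentropy of a vector with pairwise distinct entries. -/
noncomputable def subentropy (n : ℕ) (x : Fin n → ℝ) : ℝ :=
  -∑ i, (x i ^ n / ∏ j ∈ Finset.univ.erase i, (x i - x j)) * Real.log (x i)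

section Aux
open Polynomial

lemma aux_polyid (n : ℕ) (x : Fin n → ℝ) (hdist : ∀ i j, i ≠ j → x i ≠ x j) :
    (∏ j, (X + C (x j))) =
      X ^ n + ∑ i, C (x i ^ n / ∏ j ∈ Finset.univ.erase i, (x i - x j)) *
        ∏ j ∈ Finset.univ.erase i, (X + C (x j)) := by
  have hinj : Function.Injective (fun i => -x i) := by
    intro i j h
    by_contra hij
    exact hdist i j hij (by simpa using h)
  have hd : ∀ i : Fin n, (∏ j ∈ Finset.univ.erase i, (x i - x j)) ≠ 0 := by
    intro i
    refine Finset.prod_ne_zero_iff.2 fun j hj => sub_ne_zero.2 ?_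
    exact hdist i j (Ne.symm (Finset.mem_erase.1 hj).1)
  set c : Fin n → ℝ := fun i => x i ^ n / ∏ j ∈ Finset.univ.erase i, (x i - x j) with hc
  set D : ℝ[X] := (∏ j, (X + C (x j))) - X ^ n -
      ∑ i, C (c i) * ∏ j ∈ Finset.univ.erase i, (X + C (x j)) with hD
  have hDeval : ∀ k : Fin n, D.eval (-x k) = 0 := by
    intro k
    have he1 : (∏ j, (X + C (x j))).eval (-x k) = 0 := by
      rw [eval_prod]
      exact Finset.prod_eq_zero (Finset.mem_univ k) (by simp)
    have he2 : ∀ i : Fin n, i ≠ k →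
        (C (c i) * ∏ j ∈ Finset.univ.erase i, (X + C (x j))).eval (-x k) = 0 := by
      intro i hik
      rw [eval_mul, eval_prod]
      have : ∏ j ∈ Finset.univ.erase i, ((X + C (x j)).eval (-x k)) = 0 :=
        Finset.prod_eq_zero (Finset.mem_erase.2 ⟨Ne.symm hik, Finset.mem_univ k⟩) (by simp)
      rw [this, mul_zero]
    have hsum : (∑ i, C (c i) * ∏ j ∈ Finset.univ.erase i, (X + C (x j))).eval (-x k)
        = c k * ∏ j ∈ Finset.univ.erase k, (-x k + x j) := by
      rw [eval_finset_sum]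
      rw [Finset.sum_eq_single k (fun i _ hik => he2 i hik) (by simp)]
      simp [eval_prod]
    have hprod : ∏ j ∈ Finset.univ.erase k, (-x k + x j)
        = (-1 : ℝ) ^ (n - 1) * ∏ j ∈ Finset.univ.erase k, (x k - x j) := by
      rw [show (∏ j ∈ Finset.univ.erase k, (-x k + x j))
          = ∏ j ∈ Finset.univ.erase k, (-(x k - x j)) by
        refine Finset.prod_congr rfl fun j _ => by ring]
      rw [Finset.prod_congr rfl (fun j _ => (neg_eq_neg_one_mul (x k - x j))),
        Finset.prod_mul_distrib, Finset.prod_const]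
      congr 2
      rw [Finset.card_erase_of_mem (Finset.mem_univ k), Finset.card_univ, Fintype.card_fin]
    have hck : c k * ((-1 : ℝ) ^ (n - 1) * ∏ j ∈ Finset.univ.erase k, (x k - x j))
        = (-1 : ℝ) ^ (n - 1) * x k ^ n := by
      have h := div_mul_cancel₀ (x k ^ n) (hd k)
      calc c k * ((-1 : ℝ) ^ (n - 1) * ∏ j ∈ Finset.univ.erase k, (x k - x j))
          = (-1 : ℝ) ^ (n - 1) * (c k * ∏ j ∈ Finset.univ.erase k, (x k - x j)) := by ring
        _ = (-1 : ℝ) ^ (n - 1) * x k ^ n := by rw [hc]; rw [h]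
    have hn1 : 1 ≤ n := Nat.one_le_iff_ne_zero.2 (by rintro rfl; exact k.elim0)
    have hpow : (-x k : ℝ) ^ n = -((-1 : ℝ) ^ (n-1) * x k ^ n) := by
      rw [neg_pow]
      have : (-1 : ℝ) ^ n = -(-1 : ℝ) ^ (n - 1) := by
        conv_lhs => rw [show n = (n-1) + 1 by omega]
        rw [pow_succ]; ring
      rw [this]; ring
    rw [hD]
    simp only [eval_sub, eval_pow, eval_X, he1, hsum, hprod, hck, hpow]
    ring
  have hdegP : (∏ j, (X + C (x j)) : ℝ[X]).degree = n := by
    rw [degree_prod]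
    simp [degree_X_add_C]
  have hmonP : (∏ j, (X + C (x j)) : ℝ[X]).Monic :=
    monic_prod_of_monic _ _ fun i _ => monic_X_add_C (x i)
  have hdeg1 : ((∏ j, (X + C (x j))) - X ^ n : ℝ[X]).degree < n := by
    have hdq : (∏ j, (X + C (x j)) : ℝ[X]).degree = (X ^ n : ℝ[X]).degree := by
      rw [hdegP, degree_X_pow]
    have := degree_sub_lt hdq hmonP.ne_zero
      (by rw [hmonP.leadingCoeff, leadingCoeff_X_pow])
    rwa [hdegP] at this
  have hdeg2 : (∑ i, C (c i) * ∏ j ∈ Finset.univ.erase i, (X + C (x j)) : ℝ[X]).degree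
      < n := by
    refine lt_of_le_of_lt (degree_sum_le _ _) ?_
    rw [Finset.sup_lt_iff (by exact_mod_cast WithBot.bot_lt_coe (n:ℕ))]
    intro i _
    refine lt_of_le_of_lt (degree_mul_le _ _) ?_
    have h1 : (C (c i)).degree ≤ 0 := degree_C_le
    have h2 : (∏ j ∈ Finset.univ.erase i, (X + C (x j)) : ℝ[X]).degree = (n - 1 : ℕ) := by
      rw [degree_prod]
      simp only [degree_X_add_C]
      rw [Finset.sum_const, Finset.card_erase_of_mem (Finset.mem_univ i), Finset.card_univ,
        Fintype.card_fin]
      simp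
    have hn1 : 1 ≤ n := Nat.one_le_iff_ne_zero.2 (by rintro rfl; exact i.elim0)
    calc (C (c i)).degree + (∏ j ∈ Finset.univ.erase i, (X + C (x j)) : ℝ[X]).degree
        ≤ 0 + (n - 1 : ℕ) := add_le_add h1 (le_of_eq h2)
      _ < n := by
        rw [zero_add]
        exact Nat.cast_lt.2 (by omega)
  have hdegD : D.degree < n := by
    rw [hD]
    exact lt_of_le_of_lt (degree_sub_le _ _) (max_lt hdeg1 hdeg2)
  have hD0 : D = 0 := by
    by_cases h : D = 0
    · exact h
    · refine eq_zero_of_natDegree_lt_card_of_eval_eq_zero D hinj hDeval ?_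
      rw [Fintype.card_fin]
      exact (natDegree_lt_iff_degree_lt h).2 hdegD
  linear_combination hD0

lemma aux_sum_c (n : ℕ) (hn : 1 ≤ n) (x : Fin n → ℝ) (hdist : ∀ i j, i ≠ j → x i ≠ x j)
    (hpoly : (∏ j, (X + C (x j))) =
      X ^ n + ∑ i, C (x i ^ n / ∏ j ∈ Finset.univ.erase i, (x i - x j)) *
        ∏ j ∈ Finset.univ.erase i, (X + C (x j))) :
    ∑ i, x i ^ n / ∏ j ∈ Finset.univ.erase i, (x i - x j) = ∑ i, x i := by
  have h := congrArg (fun p : ℝ[X] => p.coeff (n - 1)) hpoly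
  have hL : (∏ j, (X + C (x j)) : ℝ[X]).coeff (n - 1) = ∑ i, x i := by
    rw [Finset.prod_X_add_C_coeff Finset.univ x (by rw [Finset.card_univ, Fintype.card_fin]; omega : n - 1 ≤ Finset.univ.card)]
    rw [Finset.card_univ, Fintype.card_fin, show n - (n - 1) = 1 by omega,
      Finset.powersetCard_one, Finset.sum_map]
    simp
  have hX : (X ^ n : ℝ[X]).coeff (n - 1) = 0 := by
    rw [coeff_X_pow, if_neg (by omega)]
  have hQ : ∀ i : Fin n, ((∏ j ∈ Finset.univ.erase i, (X + C (x j))) : ℝ[X]).coeff (n - 1)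
      = 1 := by
    intro i
    have hmon : ((∏ j ∈ Finset.univ.erase i, (X + C (x j))) : ℝ[X]).Monic :=
      monic_prod_of_monic _ _ fun j _ => monic_X_add_C (x j)
    have hdeg : ((∏ j ∈ Finset.univ.erase i, (X + C (x j))) : ℝ[X]).natDegree = n - 1 := by
      rw [natDegree_prod _ _ (fun j _ => X_add_C_ne_zero (x j))]
      simp only [natDegree_X_add_C]
      rw [Finset.sum_const, Finset.card_erase_of_mem (Finset.mem_univ i), Finset.card_univ,
        Fintype.card_fin, smul_eq_mul, mul_one]
    rw [← hdeg]
    exact hmon.coeff_natDegree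
  rw [hL, coeff_add, hX, zero_add, finset_sum_coeff] at h
  simp only [coeff_C_mul, hQ, mul_one] at h
  exact h.symm

lemma aux_int (a : ℝ) (ha : 0 < a) :
    IntegrableOn (fun t => 1/(1+t) - 1/(t+a)) (Set.Ioi (0:ℝ)) ∧
    ∫ t in Set.Ioi (0:ℝ), (1/(1+t) - 1/(t+a)) = Real.log a := by
  set F : ℝ → ℝ := fun t => Real.log (1+t) - Real.log (t+a) with hF
  have hderiv : ∀ t ∈ Set.Ici (0:ℝ), HasDerivAt F (1/(1+t) - 1/(t+a)) t := by
    intro t ht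
    have ht0 : (0:ℝ) ≤ t := ht
    have h1 : HasDerivAt (fun s : ℝ => Real.log (1+s)) (1/(1+t)) t := by
      simpa using (((hasDerivAt_id t).const_add 1).log (by positivity))
    have h2 : HasDerivAt (fun s : ℝ => Real.log (s+a)) (1/(t+a)) t := by
      simpa using (((hasDerivAt_id t).add_const a).log (by positivity))
    exact h1.sub h2
  have htend : Filter.Tendsto F Filter.atTop (nhds 0) := by
    have l1 : Filter.Tendsto (fun t : ℝ => t + a) Filter.atTop Filter.atTop :=
      Filter.tendsto_atTop_add_const_right _ a Filter.tendsto_id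
    have l2 : Filter.Tendsto (fun t : ℝ => (1-a)/(t+a)) Filter.atTop (nhds 0) :=
      Filter.Tendsto.div_atTop tendsto_const_nhds l1
    have l3 : Filter.Tendsto (fun t : ℝ => 1 + (1-a)/(t+a)) Filter.atTop (nhds 1) := by
      simpa using tendsto_const_nhds.add l2
    have l4 : Filter.Tendsto (fun t : ℝ => (1+t)/(t+a)) Filter.atTop (nhds 1) := by
      refine l3.congr' ?_
      filter_upwards [Filter.eventually_gt_atTop (0:ℝ)] with t ht
      have h1 : t + a ≠ 0 := by positivity
      field_simp
      ring
    have l5 : Filter.Tendsto (fun t : ℝ => Real.log ((1+t)/(t+a))) Filter.atTop (nhds 0) := by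
      have := (Real.continuousAt_log one_ne_zero).tendsto.comp l4
      simpa [Function.comp_def] using this
    refine l5.congr' ?_
    filter_upwards [Filter.eventually_gt_atTop (0:ℝ)] with t ht
    rw [hF]
    rw [Real.log_div (by positivity) (by positivity)]
  have hF0 : F 0 = -Real.log a := by simp [hF]
  by_cases hle : 1 ≤ a
  · have hpos : ∀ t ∈ Set.Ioi (0:ℝ), 0 ≤ 1/(1+t) - 1/(t+a) := by
      intro t ht
      have ht0 : (0:ℝ) < t := ht
      have : 1/(t+a) ≤ 1/(1+t) := by
        apply one_div_le_one_div_of_le (by positivity)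
        linarith
      linarith
    refine ⟨integrableOn_Ioi_deriv_of_nonneg' hderiv hpos htend, ?_⟩
    rw [integral_Ioi_of_hasDerivAt_of_nonneg' hderiv hpos htend, hF0]
    ring
  · push_neg at hle
    have hneg : ∀ t ∈ Set.Ioi (0:ℝ), 1/(1+t) - 1/(t+a) ≤ 0 := by
      intro t ht
      have ht0 : (0:ℝ) < t := ht
      have : 1/(1+t) ≤ 1/(t+a) := by
        apply one_div_le_one_div_of_le (by positivity)
        linarith
      linarith
    refine ⟨integrableOn_Ioi_deriv_of_nonpos' hderiv hneg htend, ?_⟩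
    rw [integral_Ioi_of_hasDerivAt_of_nonpos' hderiv hneg htend, hF0]
    ring

lemma aux_main (n : ℕ) (x : Fin n → ℝ)
    (hx : ∀ i, 0 < x i)
    (hdist : ∀ i j, i ≠ j → x i ≠ x j)
    (hsum : ∑ i, x i = 1)
    (hpoly : (∏ j, (X + C (x j))) =
      X ^ n + ∑ i, C (x i ^ n / ∏ j ∈ Finset.univ.erase i, (x i - x j)) *
        ∏ j ∈ Finset.univ.erase i, (X + C (x j)))
    (hc1 : ∑ i, x i ^ n / ∏ j ∈ Finset.univ.erase i, (x i - x j) = 1)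
    (hint : ∀ a : ℝ, 0 < a →
      IntegrableOn (fun t => 1/(1+t) - 1/(t+a)) (Set.Ioi (0:ℝ)) ∧
      ∫ t in Set.Ioi (0:ℝ), (1/(1+t) - 1/(t+a)) = Real.log a) :
    (-∑ i, (x i ^ n / ∏ j ∈ Finset.univ.erase i, (x i - x j)) * Real.log (x i) : ℝ) =
      -∫ t in Set.Ioi (0 : ℝ), (t ^ n / ∏ j, (t + x j) - t / (1 + t)) := by
  set c : Fin n → ℝ := fun i => x i ^ n / ∏ j ∈ Finset.univ.erase i, (x i - x j) with hc
  -- pointwise identity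
  have hpt : ∀ t ∈ Set.Ioi (0:ℝ),
      t ^ n / ∏ j, (t + x j) - t / (1 + t) = ∑ i, c i * (1/(1+t) - 1/(t + x i)) := by
    intro t ht
    have ht0 : (0:ℝ) < t := ht
    have hP : (0:ℝ) < ∏ j, (t + x j) := Finset.prod_pos fun j _ => by
      have := hx j; linarith
    have key : ∏ j, (t + x j) = t ^ n + ∑ i, c i * ∏ j ∈ Finset.univ.erase i, (t + x j) := by
      have := congrArg (fun p : ℝ[X] => p.eval t) hpoly
      simpa [eval_prod, eval_finset_sum, add_comm] using this
    have hQpos : ∀ i : Fin n, (0:ℝ) < ∏ j ∈ Finset.univ.erase i, (t + x j) := by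
      intro i
      refine Finset.prod_pos fun j _ => ?_
      have := hx j; linarith
    have hsplit : ∀ i : Fin n, c i * (1/(1+t) - 1/(t + x i)) =
        c i / (1+t) - c i * (∏ j ∈ Finset.univ.erase i, (t + x j)) / ∏ j, (t + x j) := by
      intro i
      have hPi : ∏ j, (t + x j) = (t + x i) * ∏ j ∈ Finset.univ.erase i, (t + x j) :=
        (Finset.mul_prod_erase _ _ (Finset.mem_univ i)).symm
      have hxi : (0:ℝ) < t + x i := by have := hx i; linarith
      have h1t : (0:ℝ) < 1 + t := by linarith
      rw [hPi]
      generalize c i = ci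
      have hQ0 := ne_of_gt (hQpos i)
      generalize (∏ j ∈ Finset.univ.erase i, (t + x j)) = Q at hQ0 ⊢
      field_simp
    rw [Finset.sum_congr rfl fun i _ => hsplit i, Finset.sum_sub_distrib, ← Finset.sum_div,
      ← Finset.sum_div, hc1]
    have hsum2 : ∑ i, c i * ∏ j ∈ Finset.univ.erase i, (t + x j)
        = (∏ j, (t + x j)) - t ^ n := by rw [key]; ring
    rw [hsum2]
    have h1t : (0:ℝ) < 1 + t := by linarith
    field_simp
    ring
  rw [setIntegral_congr_fun measurableSet_Ioi hpt]
  rw [integral_finset_sum _ (fun i _ => ((hint (x i) (hx i)).1.const_mul (c i)))]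
  have : ∀ i : Fin n, ∫ t in Set.Ioi (0:ℝ), c i * (1/(1+t) - 1/(t + x i))
      = c i * Real.log (x i) := by
    intro i
    rw [MeasureTheory.integral_const_mul, (hint (x i) (hx i)).2]
  rw [Finset.sum_congr rfl fun i _ => this i]

end Aux

theorem stmt_17 (n : ℕ) (x : Fin n → ℝ)
    (hx : ∀ i, 0 < x i)
    (hdist : ∀ i j, i ≠ j → x i ≠ x j)
    (hsum : ∑ i, x i = 1) :
    subentropy n x =
      -∫ t in Set.Ioi (0 : ℝ), (t ^ n / ∏ j, (t + x j) - t / (1 + t)) := by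
  have hn : 1 ≤ n := by
    rcases Nat.eq_zero_or_pos n with h | h
    · subst h; simp at hsum
    · exact h
  have hpoly := aux_polyid n x hdist
  have hc1 : ∑ i, x i ^ n / ∏ j ∈ Finset.univ.erase i, (x i - x j) = 1 :=
    (aux_sum_c n hn x hdist hpoly).trans hsum
  rw [subentropy]
  exact aux_main n x hx hdist hsum hpoly hc1 (fun a ha => aux_int a ha)
end
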